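/- arXiv:2506.11647 — 3 statements merged into one kernel-verified Lean document; each statement's English description precedes it below -/
import Mathlib

section
/- Let {W_t}_{t≥1} be a sequence of N×N doubly stochastic matrices such that every nonzero entry of W_t is at least η ∈ (0,1), every diagonal entry [W_t]_{ii} ≥ η, and the graph sequence is B-strongly connected. Define Φ(t,s) = W_{t−1}···W_{s+1}W_s for t > s and Φ(s,s) = I_N. Then for every k ≥ s ≥ 1 and all i, j ∈ [N], |[Φ(k,s)]_{ij} − 1/N| ≤ γ β^{k−s}, where γ = (1 − η/(4N²))^{−2} and β = (1 − η/(4N²))^{1/B}. -/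
open Finset

/-- A matrix is doubly stochastic: nonnegative entries, all row sums and
column sums equal to one. -/
def IsDoublyStochasticMat {N : ℕ} (W : Matrix (Fin N) (Fin N) ℝ) : Prop :=
  (∀ i j, 0 ≤ W i j) ∧ (∀ i, ∑ j, W i j = 1) ∧ (∀ j, ∑ i, W i j = 1)

/-- The graph sequence induced by the matrices `W t` (edge `(i,j)` at time `t`
iff `W t i j > 0`) is `B`-strongly connected: for every `t ≥ 1` the digraph
whose edges are the union of the edge sets at times `t, …, t+B-1` is strongly
connected (any node reaches any other along edges of the union graph). -/
def BStronglyConnectedSeq {N : ℕ} (W : ℕ → Matrix (Fin N) (Fin N) ℝ) (B : ℕ) : Prop :=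
  ∀ t, 1 ≤ t → ∀ i j : Fin N,
    Relation.ReflTransGen (fun a b => ∃ l, l < B ∧ 0 < W (t + l) a b) i j

/-- The transition matrix `Φ(k,s) = W_{k-1} ⋯ W_{s+1} W_s` (and `Φ(s,s) = I`). -/
noncomputable def transMat {N : ℕ} (W : ℕ → Matrix (Fin N) (Fin N) ℝ) (k s : ℕ) :
    Matrix (Fin N) (Fin N) ℝ :=
  (List.range (k - s)).foldl (fun M l => W (s + l) * M) 1

section Helpers


/-- Exit lemma for reflexive-transitive closure. -/
lemma rtg_exit {α : Type*} {R : α → α → Prop} {i j : α}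
    (h : Relation.ReflTransGen R i j) (P : α → Prop) (hi : P i) (hj : ¬ P j) :
    ∃ a b, P a ∧ ¬ P b ∧ R a b := by
  revert hi
  induction h using Relation.ReflTransGen.head_induction_on with
  | refl => exact fun hi => absurd hi hj
  | head hR hRT ih =>
    rename_i a b
    intro ha
    by_cases hb : P b
    · exact ih hb
    · exact ⟨a, b, ha, hb, hR⟩

/-- Sum of lengths of disjoint consecutive intervals of a monotone sequence is at most the
length of an enclosing interval. -/
lemma sum_gaps_le {y : ℕ → ℝ} (hy : Monotone y) :
    ∀ T : Finset ℕ, ∀ lo hi : ℝ, T.Nonempty → (∀ l ∈ T, lo ≤ y l ∧ y (l + 1) ≤ hi) →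
      ∑ l ∈ T, (y (l + 1) - y l) ≤ hi - lo := by
  intro T
  induction T using Finset.strongInduction with
  | _ T ih =>
    intro lo hi hne hT
    set l₀ := T.max' hne with hl₀
    have hl₀T : l₀ ∈ T := T.max'_mem hne
    have hsplit : ∑ l ∈ T, (y (l + 1) - y l)
        = ∑ l ∈ T.erase l₀, (y (l + 1) - y l) + (y (l₀ + 1) - y l₀) := by
      rw [add_comm, ← Finset.add_sum_erase _ _ hl₀T]
    rw [hsplit]
    have h1 : lo ≤ y l₀ := (hT l₀ hl₀T).1
    have h2 : y (l₀ + 1) ≤ hi := (hT l₀ hl₀T).2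
    rcases (T.erase l₀).eq_empty_or_nonempty with he | hne'
    · rw [he]
      simp only [Finset.sum_empty, zero_add]
      linarith
    · have hsub : T.erase l₀ ⊂ T := Finset.erase_ssubset hl₀T
      have hrec := ih _ hsub lo (y l₀) hne' (fun l hl => by
        refine ⟨(hT l (Finset.mem_of_mem_erase hl)).1, hy ?_⟩
        have hlt : l < l₀ := lt_of_le_of_ne (T.le_max' l (Finset.mem_of_mem_erase hl))
          (Finset.ne_of_mem_erase hl)
        omega)
      linarith


end Helpers

section Win

variable {N B : ℕ}

set_option maxHeartbeats 2000000 in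
lemma window_contraction (hN : 0 < N) (hB : 0 < B) {η : ℝ} (hη0 : 0 < η)
    (A : ℕ → Matrix (Fin N) (Fin N) ℝ)
    (hnn : ∀ r a b, 0 ≤ A r a b) (hrow : ∀ r a, ∑ b, A r a b = 1)
    (hcol : ∀ r b, ∑ a, A r a b = 1)
    (hpos : ∀ r a b, 0 < A r a b → η ≤ A r a b)
    (hdiagpos : ∀ r a, 0 < A r a a)
    (hconn : ∀ S : Finset (Fin N), S.Nonempty → S ≠ Finset.univ →
       ∃ a ∈ S, ∃ b ∉ S, ∃ r, r < B ∧ 0 < A r a b)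
    (x : ℕ → Fin N → ℝ) (hx : ∀ r i, x (r+1) i = ∑ b, A r i b * x r b)
    (hmean : ∑ i, x 0 i = 0) :
    ∑ i, (x B i)^2 ≤ (1 - 2*η/(N:ℝ)^2) * ∑ i, (x 0 i)^2 := by
  classical
  -- the variance of row a at time r
  set Var : ℕ → Fin N → ℝ := fun r a => ∑ b, A r a b * (x r b - x (r+1) a)^2 with hVar
  have hVar_nonneg : ∀ r a, 0 ≤ Var r a := by
    intro r a
    exact Finset.sum_nonneg fun b _ => mul_nonneg (hnn r a b) (sq_nonneg _)
  -- step identity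
  have hstep : ∀ r, ∑ a, Var r a = (∑ i, (x r i)^2) - ∑ i, (x (r+1) i)^2 := by
    intro r
    have h1 : ∀ a, Var r a = (∑ b, A r a b * (x r b)^2) - (x (r+1) a)^2 := by
      intro a
      have hc : ∑ b, A r a b * x r b = x (r+1) a := (hx r a).symm
      calc Var r a
          = ∑ b, (A r a b * (x r b)^2 - 2*(x (r+1) a)*(A r a b * x r b)
              + (x (r+1) a)^2 * A r a b) := by
            apply Finset.sum_congr rfl; intro b _; ring
        _ = (∑ b, A r a b * (x r b)^2) - 2*(x (r+1) a)*(∑ b, A r a b * x r b)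
              + (x (r+1) a)^2 * (∑ b, A r a b) := by
            rw [Finset.sum_add_distrib, Finset.sum_sub_distrib, ← Finset.mul_sum,
              ← Finset.mul_sum]
        _ = _ := by rw [hc, hrow]; ring
    calc ∑ a, Var r a
        = ∑ a, ((∑ b, A r a b * (x r b)^2) - (x (r+1) a)^2) :=
          Finset.sum_congr rfl fun a _ => h1 a
      _ = (∑ a, ∑ b, A r a b * (x r b)^2) - ∑ a, (x (r+1) a)^2 := Finset.sum_sub_distrib _ _
      _ = (∑ b, ∑ a, A r a b * (x r b)^2) - ∑ a, (x (r+1) a)^2 := by rw [Finset.sum_comm]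
      _ = (∑ b, (x r b)^2) - ∑ a, (x (r+1) a)^2 := by
          congr 1
          apply Finset.sum_congr rfl; intro b _
          rw [← Finset.sum_mul, hcol, one_mul]
  set Dtot := ∑ r ∈ Finset.range B, ∑ a, Var r a with hDtot
  have hDtot_eq : Dtot = (∑ i, (x 0 i)^2) - ∑ i, (x B i)^2 := by
    rw [hDtot]
    calc ∑ r ∈ Finset.range B, ∑ a, Var r a
        = ∑ r ∈ Finset.range B, ((∑ i, (x r i)^2) - ∑ i, (x (r+1) i)^2) := by
          exact Finset.sum_congr rfl fun r _ => hstep r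
      _ = (∑ i, (x 0 i)^2) - ∑ i, (x B i)^2 := Finset.sum_range_sub' _ _
  have hDtot_nonneg : 0 ≤ Dtot :=
    Finset.sum_nonneg fun r _ => Finset.sum_nonneg fun a _ => hVar_nonneg r a
  -- pair bound
  have varpair : ∀ r a p q, 0 < A r a p → 0 < A r a q →
      (η/2) * (x r p - x r q)^2 ≤ Var r a := by
    intro r a p q hp hq
    by_cases hpq : p = q
    · subst hpq
      simp only [sub_self, ne_eq, OfNat.ofNat_ne_zero, not_false_eq_true, zero_pow,
        mul_zero]
      exact hVar_nonneg r a
    · have hsub : ∑ b ∈ ({p, q} : Finset (Fin N)), A r a b * (x r b - x (r+1) a)^2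
          ≤ Var r a := by
        apply Finset.sum_le_sum_of_subset_of_nonneg (Finset.subset_univ _)
        intro b _ _
        exact mul_nonneg (hnn r a b) (sq_nonneg _)
      rw [Finset.sum_pair hpq] at hsub
      have e1 : η * (x r p - x (r+1) a)^2 ≤ A r a p * (x r p - x (r+1) a)^2 :=
        mul_le_mul_of_nonneg_right (hpos _ _ _ hp) (sq_nonneg _)
      have e2 : η * (x r q - x (r+1) a)^2 ≤ A r a q * (x r q - x (r+1) a)^2 :=
        mul_le_mul_of_nonneg_right (hpos _ _ _ hq) (sq_nonneg _)
      have key : η*((x r p - x (r+1) a)^2 + (x r q - x (r+1) a)^2)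
          = η/2*(x r p - x r q)^2 + η/2*(x r p + x r q - 2*(x (r+1) a))^2 := by ring
      have hnn2 : 0 ≤ η/2*(x r p + x r q - 2*(x (r+1) a))^2 := by positivity
      linarith
  -- sorted initial values, extended to ℕ
  set σ := Tuple.sort (x 0) with hσ
  set y : ℕ → ℝ := fun l => x 0 (σ ⟨min l (N-1), by omega⟩) with hy
  have hymono : Monotone y := by
    intro l l' hll
    have h1 : (⟨min l (N-1), by omega⟩ : Fin N) ≤ ⟨min l' (N-1), by omega⟩ := by
      simp only [Fin.mk_le_mk]
      omega
    exact Tuple.monotone_sort (x 0) h1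
  have hyval : ∀ a : Fin N, ∃ l : ℕ, l < N ∧ x 0 a = y l := by
    intro a
    refine ⟨(σ.symm a : Fin N), (σ.symm a).isLt, ?_⟩
    have : (⟨min ((σ.symm a : Fin N) : ℕ) (N-1), by omega⟩ : Fin N) = σ.symm a := by
      apply Fin.ext
      simp only
      have := (σ.symm a).isLt
      omega
    rw [hy]
    simp only [this, Equiv.apply_symm_apply]
  have hybound : ∀ a : Fin N, y 0 ≤ x 0 a ∧ x 0 a ≤ y (N-1) := by
    intro a
    obtain ⟨l, hl, hxa⟩ := hyval a
    rw [hxa]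
    exact ⟨hymono (Nat.zero_le l), hymono (by omega)⟩
  -- gaps
  set g : ℕ → ℝ := fun l => y (l+1) - y l with hg
  have hg_nonneg : ∀ l, 0 ≤ g l := fun l => sub_nonneg.2 (hymono (Nat.le_succ l))
  set T := (Finset.range (N-1)).filter (fun l => 0 < g l) with hT
  -- the crossing data for each genuine cut
  have EX : ∀ l ∈ T, ∃ rc : ℕ × Fin N, rc.1 < B ∧
      (∃ p, 0 < A rc.1 rc.2 p ∧ y (l+1) ≤ x rc.1 p) ∧
      (∃ q, 0 < A rc.1 rc.2 q ∧ x rc.1 q ≤ y l) := by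
    intro l hl
    rw [hT, Finset.mem_filter, Finset.mem_range] at hl
    obtain ⟨hlN, hgl⟩ := hl
    have hgl' : y l < y (l+1) := by
      have : 0 < y (l+1) - y l := hgl
      linarith
    set S : Finset (Fin N) := Finset.univ.filter (fun a => x 0 a ≤ y l) with hS
    have hmemS : ∀ a, a ∈ S ↔ x 0 a ≤ y l := by
      intro a; rw [hS, Finset.mem_filter]; simp
    have hyl1 : y (l+1) ≤ y (N-1) := hymono (by omega)
    have hSne : S.Nonempty := by
      refine ⟨σ ⟨0, hN⟩, (hmemS _).2 ?_⟩
      have h0 : x 0 (σ ⟨0, hN⟩) = y 0 := by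
        rw [hy]; congr 2
      rw [h0]; exact hymono (Nat.zero_le l)
    have hSuniv : S ≠ Finset.univ := by
      intro hcon
      have hmem : σ ⟨N-1, by omega⟩ ∈ S := hcon ▸ Finset.mem_univ _
      rw [hmemS] at hmem
      have hq : x 0 (σ ⟨N-1, by omega⟩) = y (N-1) := by
        rw [hy]; congr 2; apply Fin.ext; simp
      rw [hq] at hmem
      linarith
    have houtS : ∀ a, a ∉ S → y (l+1) ≤ x 0 a := by
      intro a ha
      rw [hmemS] at ha; push_neg at ha
      obtain ⟨la, hla, hxa⟩ := hyval a
      rw [hxa] at ha ⊢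
      by_contra hcon; push_neg at hcon
      have hlal : la ≤ l := by
        by_contra h'; push_neg at h'
        exact absurd (hymono (by omega : l + 1 ≤ la)) (by linarith)
      exact absurd (hymono hlal) (by linarith)
    obtain ⟨a₀, ha₀, b₀, hb₀, r₁, hr₁B, hr₁pos⟩ := hconn S hSne hSuniv
    set Q : ℕ → Prop :=
      fun r => ∃ a b : Fin N, ((a ∈ S ∧ b ∉ S) ∨ (a ∉ S ∧ b ∈ S)) ∧ 0 < A r a b with hQdef
    have hQ1 : Q r₁ := ⟨a₀, b₀, Or.inl ⟨ha₀, hb₀⟩, hr₁pos⟩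
    have hQex : ∃ r, Q r := ⟨r₁, hQ1⟩
    have hr₀B : Nat.find hQex < B := lt_of_le_of_lt (Nat.find_min' hQex hQ1) hr₁B
    set r₀ := Nat.find hQex with hr₀
    have hpers : ∀ r, r ≤ r₀ → (∀ a ∈ S, x r a ≤ y l) ∧ (∀ b, b ∉ S → y (l+1) ≤ x r b) := by
      intro r
      induction r with
      | zero => exact fun _ => ⟨fun a ha => (hmemS a).1 ha, houtS⟩
      | succ r ih =>
        intro hr
        have hrlt : r < r₀ := by omega
        have hnQ : ¬ Q r := Nat.find_min hQex hrlt
        have hzero : ∀ a b : Fin N, ((a ∈ S ∧ b ∉ S) ∨ (a ∉ S ∧ b ∈ S)) → A r a b = 0 := by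
          intro a b hab
          by_contra hne
          exact hnQ ⟨a, b, hab, lt_of_le_of_ne (hnn r a b) (Ne.symm hne)⟩
        obtain ⟨ih1, ih2⟩ := ih (by omega)
        constructor
        · intro a ha
          have hexp : x (r+1) a - y l = ∑ b, A r a b * (x r b - y l) := by
            have : ∑ b, A r a b * (x r b - y l)
                = (∑ b, A r a b * x r b) - (∑ b, A r a b) * y l := by
              rw [Finset.sum_mul, ← Finset.sum_sub_distrib]
              apply Finset.sum_congr rfl; intro b _; ring
            rw [this, hrow, hx r a]; ring
          have hle : ∑ b, A r a b * (x r b - y l) ≤ 0 := by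
            apply Finset.sum_nonpos
            intro b _
            by_cases hbS : b ∈ S
            · exact mul_nonpos_of_nonneg_of_nonpos (hnn r a b) (by linarith [ih1 b hbS])
            · rw [hzero a b (Or.inl ⟨ha, hbS⟩), zero_mul]
          linarith
        · intro b hb
          have hexp : x (r+1) b - y (l+1) = ∑ c, A r b c * (x r c - y (l+1)) := by
            have : ∑ c, A r b c * (x r c - y (l+1))
                = (∑ c, A r b c * x r c) - (∑ c, A r b c) * y (l+1) := by
              rw [Finset.sum_mul, ← Finset.sum_sub_distrib]
              apply Finset.sum_congr rfl; intro c _; ring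
            rw [this, hrow, hx r b]; ring
          have hle : 0 ≤ ∑ c, A r b c * (x r c - y (l+1)) := by
            apply Finset.sum_nonneg
            intro c _
            by_cases hcS : c ∈ S
            · rw [hzero b c (Or.inr ⟨hb, hcS⟩), zero_mul]
            · exact mul_nonneg (hnn r b c) (by linarith [ih2 c hcS])
          linarith
    obtain ⟨hbelow, habove⟩ := hpers r₀ le_rfl
    obtain ⟨a, b, hdir, hApos⟩ := Nat.find_spec hQex
    rcases hdir with ⟨haS, hbS⟩ | ⟨haS, hbS⟩
    · exact ⟨(r₀, a), hr₀B, ⟨b, hApos, habove b hbS⟩, ⟨a, hdiagpos r₀ a, hbelow a haS⟩⟩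
    · exact ⟨(r₀, a), hr₀B, ⟨a, hdiagpos r₀ a, habove a haS⟩, ⟨b, hApos, hbelow b hbS⟩⟩
  -- assignment and fiberwise accounting
  have haccount : ∑ l ∈ T, (g l)^2 ≤ (2/η) * Dtot := by
    have hnonempty : Nonempty (ℕ × Fin N) := ⟨(0, ⟨0, hN⟩)⟩
    choose! F hF using EX
    have hmaps : ∀ l ∈ T, F l ∈ Finset.range B ×ˢ (Finset.univ : Finset (Fin N)) := by
      intro l hl
      rw [Finset.mem_product, Finset.mem_range]
      exact ⟨(hF l hl).1, Finset.mem_univ _⟩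
    rw [← Finset.sum_fiberwise_of_maps_to hmaps (fun l => (g l)^2)]
    have hDrw : (2/η) * Dtot
        = ∑ rc ∈ Finset.range B ×ˢ (Finset.univ : Finset (Fin N)),
            (2/η) * Var rc.1 rc.2 := by
      rw [← Finset.mul_sum]
      congr 1
      rw [Finset.sum_product]
    rw [hDrw]
    apply Finset.sum_le_sum
    intro rc _
    rcases (T.filter (fun l => F l = rc)).eq_empty_or_nonempty with he | hne
    · rw [he, Finset.sum_empty]
      exact mul_nonneg (by positivity) (hVar_nonneg _ _)
    · set supp := Finset.univ.filter (fun b => 0 < A rc.1 rc.2 b) with hsupp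
      have hsuppne : supp.Nonempty := by
        refine ⟨rc.2, ?_⟩
        rw [hsupp, Finset.mem_filter]
        exact ⟨Finset.mem_univ _, hdiagpos rc.1 rc.2⟩
      set img := supp.image (x rc.1) with himg
      have himgne : img.Nonempty := hsuppne.image _
      set hi := img.max' himgne with hhi
      set lo := img.min' himgne with hlo
      have hbounds : ∀ l ∈ T.filter (fun l => F l = rc), lo ≤ y l ∧ y (l+1) ≤ hi := by
        intro l hl
        rw [Finset.mem_filter] at hl
        obtain ⟨hlT, hFrc⟩ := hl
        have h := hF l hlT
        rw [hFrc] at h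
        obtain ⟨_, ⟨p, hpA, hpx⟩, ⟨q, hqA, hqx⟩⟩ := h
        constructor
        · have hqin : x rc.1 q ∈ img := by
            apply Finset.mem_image_of_mem
            rw [hsupp, Finset.mem_filter]
            exact ⟨Finset.mem_univ _, hqA⟩
          exact le_trans (img.min'_le _ hqin) hqx
        · have hpin : x rc.1 p ∈ img := by
            apply Finset.mem_image_of_mem
            rw [hsupp, Finset.mem_filter]
            exact ⟨Finset.mem_univ _, hpA⟩
          exact le_trans hpx (img.le_max' _ hpin)
      have hgsum : ∑ l ∈ T.filter (fun l => F l = rc), g l ≤ hi - lo :=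
        sum_gaps_le hymono _ lo hi hne hbounds
      have hg2 : ∑ l ∈ T.filter (fun l => F l = rc), (g l)^2
          ≤ (∑ l ∈ T.filter (fun l => F l = rc), g l)^2 := by
        calc ∑ l ∈ T.filter (fun l => F l = rc), (g l)^2
            ≤ ∑ l ∈ T.filter (fun l => F l = rc),
                g l * ∑ l' ∈ T.filter (fun l => F l = rc), g l' := by
              apply Finset.sum_le_sum
              intro l hl
              rw [sq]
              exact mul_le_mul_of_nonneg_left
                (Finset.single_le_sum (fun l' _ => hg_nonneg l') hl) (hg_nonneg l)
          _ = (∑ l ∈ T.filter (fun l => F l = rc), g l)^2 := by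
              rw [← Finset.sum_mul, sq]
      obtain ⟨bp, hbp, hbpx⟩ := Finset.mem_image.1 (img.max'_mem himgne)
      obtain ⟨bq, hbq, hbqx⟩ := Finset.mem_image.1 (img.min'_mem himgne)
      rw [hsupp, Finset.mem_filter] at hbp hbq
      have hvar := varpair rc.1 rc.2 bp bq hbp.2 hbq.2
      rw [hbpx, hbqx] at hvar
      have hhllo : 0 ≤ hi - lo := by
        obtain ⟨l, hl⟩ := hne
        obtain ⟨h1, h2⟩ := hbounds l hl
        have := hymono (Nat.le_succ l)
        linarith
      have hsq : (∑ l ∈ T.filter (fun l => F l = rc), g l)^2 ≤ (hi - lo)^2 :=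
        pow_le_pow_left₀ (Finset.sum_nonneg fun l _ => hg_nonneg l) hgsum 2
      have h3 : (2/η) * ((η/2) * ((hi - lo)^2)) ≤ (2/η) * Var rc.1 rc.2 :=
        mul_le_mul_of_nonneg_left hvar (by positivity)
      have h4 : (2/η) * ((η/2) * ((hi - lo)^2)) = (hi - lo)^2 := by
        field_simp
      linarith
  -- total gap and telescoping
  have htel : ∑ l ∈ Finset.range (N-1), g l = y (N-1) - y 0 := Finset.sum_range_sub y (N-1)
  have hTsum : ∑ l ∈ Finset.range (N-1), (g l)^2 = ∑ l ∈ T, (g l)^2 := by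
    rw [hT]
    rw [Finset.sum_filter_of_ne]
    intro l _ hgl
    rcases lt_or_eq_of_le (hg_nonneg l) with h | h
    · exact h
    · exfalso; apply hgl; rw [← h]; ring
  -- Cauchy-Schwarz
  have hCS : (y (N-1) - y 0)^2 ≤ ((N:ℝ) - 1) * ∑ l ∈ Finset.range (N-1), (g l)^2 := by
    rw [← htel]
    have := sq_sum_le_card_mul_sum_sq (s := Finset.range (N-1)) (f := g)
    simpa [Finset.card_range, Nat.cast_sub hN] using this
  -- initial energy bound
  have hV0 : ∑ i, (x 0 i)^2 ≤ ((N:ℝ)/4) * (y (N-1) - y 0)^2 := by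
    set M := y (N-1) with hM
    set m := y 0 with hm
    have hb : ∀ a, m ≤ x 0 a ∧ x 0 a ≤ M := hybound
    have huniv_ne : (Finset.univ : Finset (Fin N)).Nonempty := ⟨⟨0, hN⟩, Finset.mem_univ _⟩
    have hM0 : 0 ≤ M := by
      by_contra h; push_neg at h
      have hlt : ∑ i, x 0 i < ∑ _i : Fin N, (0:ℝ) :=
        Finset.sum_lt_sum_of_nonempty huniv_ne fun a _ => lt_of_le_of_lt (hb a).2 h
      rw [Finset.sum_const, smul_zero] at hlt
      linarith
    have hm0 : m ≤ 0 := by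
      by_contra h; push_neg at h
      have hlt : ∑ _i : Fin N, (0:ℝ) < ∑ i, x 0 i :=
        Finset.sum_lt_sum_of_nonempty huniv_ne fun a _ => lt_of_lt_of_le h (hb a).1
      rw [Finset.sum_const, smul_zero] at hlt
      linarith
    set P := ∑ a, max (x 0 a) 0 with hP
    set Qq := ∑ a, max (-(x 0 a)) 0 with hQq
    have hPQ : P = Qq := by
      have hdiff : P - Qq = ∑ a, (max (x 0 a) 0 - max (-(x 0 a)) 0) :=
        (Finset.sum_sub_distrib _ _).symm
      have h2 : ∀ a : Fin N, max (x 0 a) 0 - max (-(x 0 a)) 0 = x 0 a := by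
        intro a; rcases le_total (x 0 a) 0 with h | h
        · rw [max_eq_right h, max_eq_left (by linarith)]; ring
        · rw [max_eq_left h, max_eq_right (by linarith)]; ring
      rw [Finset.sum_congr rfl (fun a _ => h2 a), hmean] at hdiff
      linarith
    have hPnn : 0 ≤ P := Finset.sum_nonneg fun a _ => le_max_right _ _
    have hV0P : ∑ i, (x 0 i)^2 ≤ M * P + (-m) * Qq := by
      rw [hP, hQq, Finset.mul_sum, Finset.mul_sum, ← Finset.sum_add_distrib]
      apply Finset.sum_le_sum; intro a _
      rcases le_total (x 0 a) 0 with h | h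
      · rw [max_eq_right h, max_eq_left (by linarith)]
        have := (hb a).1
        nlinarith
      · rw [max_eq_left h, max_eq_right (by linarith)]
        have := (hb a).2
        nlinarith
    set pc := (Finset.univ.filter (fun a : Fin N => 0 < x 0 a)).card with hpc
    set qc := (Finset.univ.filter (fun a : Fin N => x 0 a < 0)).card with hqc
    have hP_le : P ≤ (pc:ℝ) * M := by
      have : P ≤ ∑ a, (if 0 < x 0 a then M else 0) := by
        apply Finset.sum_le_sum
        intro a _
        split_ifs with h
        · exact max_le (hb a).2 hM0
        · rw [max_eq_right (not_lt.1 h)]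
      calc P ≤ ∑ a, (if 0 < x 0 a then M else 0) := this
        _ = (pc:ℝ) * M := by
            rw [Finset.sum_ite, Finset.sum_const, Finset.sum_const_zero, add_zero,
              nsmul_eq_mul, hpc]
    have hQ_le : Qq ≤ (qc:ℝ) * (-m) := by
      have : Qq ≤ ∑ a, (if x 0 a < 0 then -m else 0) := by
        apply Finset.sum_le_sum
        intro a _
        split_ifs with h
        · exact max_le (by linarith [(hb a).1]) (by linarith)
        · rw [max_eq_right (by push_neg at h; linarith)]
      calc Qq ≤ ∑ a, (if x 0 a < 0 then -m else 0) := this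
        _ = (qc:ℝ) * (-m) := by
            rw [Finset.sum_ite, Finset.sum_const, Finset.sum_const_zero, add_zero,
              nsmul_eq_mul, hqc]
    have hpqN : (pc:ℝ) + qc ≤ N := by
      have hdisj : Disjoint (Finset.univ.filter (fun a : Fin N => 0 < x 0 a))
          (Finset.univ.filter (fun a : Fin N => x 0 a < 0)) := by
        rw [Finset.disjoint_filter]
        intro a _ h1 h2
        linarith
      have hcard := Finset.card_union_of_disjoint hdisj
      have hle : (Finset.univ.filter (fun a : Fin N => 0 < x 0 a)
          ∪ Finset.univ.filter (fun a : Fin N => x 0 a < 0)).card ≤ N := by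
        calc _ ≤ (Finset.univ : Finset (Fin N)).card := Finset.card_le_card (by simp)
          _ = N := by simp
      have : pc + qc ≤ N := by omega
      exact_mod_cast this
    have hQnn : 0 ≤ Qq := hPQ ▸ hPnn
    have hpMnn : (0:ℝ) ≤ (pc:ℝ) * M := mul_nonneg (Nat.cast_nonneg _) hM0
    have h1 : P * Qq ≤ ((pc:ℝ)*M) * ((qc:ℝ)*(-m)) := mul_le_mul hP_le hQ_le hQnn hpMnn
    have h2 : P^2 ≤ ((pc:ℝ)*qc) * (M*(-m)) := by
      calc P^2 = P * Qq := by rw [sq, hPQ]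
        _ ≤ ((pc:ℝ)*M) * ((qc:ℝ)*(-m)) := h1
        _ = ((pc:ℝ)*qc) * (M*(-m)) := by ring
    have h3 : (pc:ℝ)*qc ≤ (N:ℝ)^2/4 := by
      nlinarith [sq_nonneg ((pc:ℝ) - qc), Nat.cast_nonneg (α := ℝ) pc,
        Nat.cast_nonneg (α := ℝ) qc]
    have h4 : M*(-m) ≤ (M-m)^2/4 := by nlinarith [sq_nonneg (M+m)]
    have hMm : 0 ≤ M - m := by linarith
    have h5 : P^2 ≤ ((N:ℝ)*(M-m)/4)^2 := by
      calc P^2 ≤ ((pc:ℝ)*qc) * (M*(-m)) := h2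
        _ ≤ ((N:ℝ)^2/4) * ((M-m)^2/4) := by
            apply mul_le_mul h3 h4 (mul_nonneg hM0 (by linarith)) (by positivity)
        _ = ((N:ℝ)*(M-m)/4)^2 := by ring
    have hNMm : (0:ℝ) ≤ (N:ℝ)*(M-m)/4 := by positivity
    have h6 : P ≤ (N:ℝ)*(M-m)/4 := by nlinarith [h5, hPnn, hNMm]
    calc ∑ i, (x 0 i)^2 ≤ M*P + (-m)*Qq := hV0P
      _ = (M - m) * P := by rw [← hPQ]; ring
      _ ≤ (M - m) * ((N:ℝ)*(M-m)/4) := mul_le_mul_of_nonneg_left h6 hMm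
      _ = ((N:ℝ)/4) * (M - m)^2 := by ring
  -- combine
  have hkey : 2*η*(∑ i, (x 0 i)^2) ≤ (N:ℝ)^2 * Dtot := by
    have hN1 : (0:ℝ) ≤ (N:ℝ) - 1 := by
      have : (1:ℝ) ≤ (N:ℝ) := by exact_mod_cast hN
      linarith
    have h1 : ∑ i, (x 0 i)^2 ≤ ((N:ℝ)/4) * (((N:ℝ)-1) * ∑ l ∈ T, (g l)^2) := by
      apply le_trans hV0
      apply mul_le_mul_of_nonneg_left _ (by positivity)
      rw [← hTsum]
      exact hCS
    have h3 : ∑ i, (x 0 i)^2 ≤ ((N:ℝ)/4) * (((N:ℝ)-1) * ((2/η) * Dtot)) := by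
      apply le_trans h1
      apply mul_le_mul_of_nonneg_left _ (by positivity)
      exact mul_le_mul_of_nonneg_left haccount hN1
    calc 2*η*(∑ i, (x 0 i)^2)
        ≤ 2*η*(((N:ℝ)/4) * (((N:ℝ)-1) * ((2/η) * Dtot))) := by
          apply mul_le_mul_of_nonneg_left h3 (by positivity)
      _ = (N:ℝ)*((N:ℝ)-1) * Dtot := by field_simp; ring
      _ ≤ (N:ℝ)^2 * Dtot := by
          apply mul_le_mul_of_nonneg_right _ hDtot_nonneg
          nlinarith [Nat.cast_nonneg (α := ℝ) N]
  have hVBnn : (0:ℝ) ≤ ∑ i, (x 0 i)^2 := Finset.sum_nonneg fun i _ => sq_nonneg _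
  have hNpos : (0:ℝ) < (N:ℝ)^2 := by positivity
  have : ∑ i, (x B i)^2 = (∑ i, (x 0 i)^2) - Dtot := by linarith [hDtot_eq]
  rw [this]
  rw [sub_mul, one_mul]
  have : 2*η/(N:ℝ)^2 * (∑ i, (x 0 i)^2) ≤ Dtot := by
    rw [div_mul_eq_mul_div, div_le_iff₀ hNpos]
    linarith [hkey]
  linarith

end Win

set_option maxHeartbeats 1000000 in
theorem stmt0 {N B : ℕ} (hN : 0 < N) (hB : 0 < B) {η : ℝ} (hη : η ∈ Set.Ioo (0:ℝ) 1)
    (W : ℕ → Matrix (Fin N) (Fin N) ℝ)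
    (hds : ∀ t, 1 ≤ t → IsDoublyStochasticMat (W t))
    (hmin : ∀ t, 1 ≤ t → ∀ i j, W t i j ≠ 0 → η ≤ W t i j)
    (hdiag : ∀ t, 1 ≤ t → ∀ i, η ≤ W t i i)
    (hconn : BStronglyConnectedSeq W B)
    (γ β : ℝ)
    (hγ : γ = (1 - η / (4 * (N:ℝ)^2)) ^ (-2 : ℝ))
    (hβ : β = (1 - η / (4 * (N:ℝ)^2)) ^ ((1:ℝ) / (B:ℝ)))
    (k s : ℕ) (hs : 1 ≤ s) (hks : s ≤ k) (i j : Fin N) :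
    |transMat W k s i j - 1 / (N:ℝ)| ≤ γ * β ^ (k - s) := by
  classical
  obtain ⟨hη0, hη1⟩ := hη
  have hNr : (1:ℝ) ≤ (N:ℝ) := by exact_mod_cast hN
  have hBr : (0:ℝ) < (B:ℝ) := by exact_mod_cast hB
  set lam : ℝ := 1 - η / (4 * (N:ℝ)^2) with hlam
  have hquart : η / (4 * (N:ℝ)^2) ≤ η / 4 := by
    apply div_le_div_of_nonneg_left hη0.le (by norm_num)
    nlinarith
  have hlam_pos : 0 < lam := by
    rw [hlam]; linarith
  have hlam_lt1 : lam < 1 := by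
    rw [hlam]
    have : 0 < η / (4 * (N:ℝ)^2) := by positivity
    linarith
  -- the deviation sequence
  set v : ℕ → Fin N → ℝ := fun r i => transMat W (s+r) s i j - 1/N with hv
  have htrans : ∀ r, transMat W (s+(r+1)) s = W (s+r) * transMat W (s+r) s := by
    intro r
    rw [transMat, transMat]
    have h1 : s + (r+1) - s = r+1 := by omega
    have h2 : s + r - s = r := by omega
    rw [h1, h2, List.range_succ, List.foldl_append]
    simp
  have hcolsum : ∀ r b, ∑ i, transMat W (s+r) s i b = 1 := by
    intro r
    induction r with
    | zero =>
      intro b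
      have h0 : transMat W (s+0) s = 1 := by
        rw [transMat]; simp
      rw [h0]
      simp [Matrix.one_apply]
    | succ r ih =>
      intro b
      rw [htrans r]
      simp only [Matrix.mul_apply]
      rw [Finset.sum_comm]
      have : ∀ c, ∑ i, W (s+r) i c * transMat W (s+r) s c b
          = transMat W (s+r) s c b := by
        intro c
        rw [← Finset.sum_mul, (hds (s+r) (by omega)).2.2 c, one_mul]
      rw [Finset.sum_congr rfl fun c _ => this c]
      exact ih b
  have hvrec : ∀ r i', v (r+1) i' = ∑ b, W (s+r) i' b * v r b := by
    intro r i'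
    have hWrow := (hds (s+r) (by omega)).2.1
    have hrhs : ∑ b, W (s+r) i' b * v r b
        = (∑ b, W (s+r) i' b * transMat W (s+r) s b j)
          - (∑ b, W (s+r) i' b) * (1/N) := by
      rw [Finset.sum_mul, ← Finset.sum_sub_distrib]
      apply Finset.sum_congr rfl; intro b _
      rw [hv]; ring
    rw [hrhs, hWrow, one_mul, hv]
    simp only
    rw [htrans r]
    rw [Matrix.mul_apply]
  have hvmean : ∀ r, ∑ i', v r i' = 0 := by
    intro r
    rw [hv]
    simp only
    rw [Finset.sum_sub_distrib, hcolsum r j, Finset.sum_const, Finset.card_univ,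
      Fintype.card_fin, nsmul_eq_mul]
    have hNne : (N:ℝ) ≠ 0 := by positivity
    field_simp
    norm_num
  set V : ℕ → ℝ := fun r => ∑ i', (v r i')^2 with hV
  have hVnn : ∀ r, 0 ≤ V r := fun r => Finset.sum_nonneg fun i' _ => sq_nonneg _
  have hVstep : ∀ r, V (r+1) ≤ V r := by
    intro r
    obtain ⟨hWnn, hWrow, hWcol⟩ := hds (s+r) (by omega)
    rw [hV]
    simp only
    calc ∑ i', (v (r+1) i')^2
        = ∑ i', (∑ b, W (s+r) i' b * v r b)^2 :=
          Finset.sum_congr rfl fun i' _ => by rw [hvrec r i']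
      _ ≤ ∑ i', ∑ b, W (s+r) i' b * (v r b)^2 := by
          apply Finset.sum_le_sum; intro i' _
          have hcs := sum_mul_sq_le_sq_mul_sq Finset.univ
            (fun b => Real.sqrt (W (s+r) i' b))
            (fun b => Real.sqrt (W (s+r) i' b) * v r b)
          have h1 : ∀ b, Real.sqrt (W (s+r) i' b) * (Real.sqrt (W (s+r) i' b) * v r b)
              = W (s+r) i' b * v r b := by
            intro b; rw [← mul_assoc, Real.mul_self_sqrt (hWnn i' b)]
          have h2 : ∀ b, (Real.sqrt (W (s+r) i' b))^2 = W (s+r) i' b :=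
            fun b => Real.sq_sqrt (hWnn i' b)
          have h3 : ∀ b, (Real.sqrt (W (s+r) i' b) * v r b)^2
              = W (s+r) i' b * (v r b)^2 := by
            intro b; rw [mul_pow, h2]
          rw [Finset.sum_congr rfl fun b _ => h1 b,
            Finset.sum_congr rfl fun b _ => h2 b,
            Finset.sum_congr rfl fun b _ => h3 b, hWrow i', one_mul] at hcs
          exact hcs
      _ = ∑ b, (∑ i', W (s+r) i' b) * (v r b)^2 := by
          rw [Finset.sum_comm]
          exact Finset.sum_congr rfl fun b _ => (Finset.sum_mul _ _ _).symm
      _ = ∑ b, (v r b)^2 := Finset.sum_congr rfl fun b _ => by rw [hWcol b, one_mul]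
  have hVmono : ∀ r r', r ≤ r' → V r' ≤ V r := by
    intro r r' h
    induction r', h using Nat.le_induction with
    | base => exact le_rfl
    | succ r'' h ih => exact le_trans (hVstep r'') ih
  -- window contraction
  have hwin : ∀ r, V (r + B) ≤ lam^2 * V r := by
    intro r
    have happ := window_contraction hN hB hη0 (fun ρ => W (s + r + ρ))
      (fun ρ a b => (hds (s+r+ρ) (by omega)).1 a b)
      (fun ρ a => (hds (s+r+ρ) (by omega)).2.1 a)
      (fun ρ b => (hds (s+r+ρ) (by omega)).2.2 b)
      (fun ρ a b h => hmin (s+r+ρ) (by omega) a b (ne_of_gt h))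
      (fun ρ a => lt_of_lt_of_le hη0 (hdiag (s+r+ρ) (by omega) a))
      ?hconn (fun ρ => v (r + ρ)) ?hx (hvmean r)
    case hconn =>
      intro S hSne hSuniv
      obtain ⟨i₀, hi₀⟩ := hSne
      have hj₀ : ∃ j₀, j₀ ∉ S := by
        by_contra h; push_neg at h
        exact hSuniv (Finset.eq_univ_iff_forall.2 h)
      obtain ⟨j₀, hj₀⟩ := hj₀
      have hR := hconn (s + r) (by omega) i₀ j₀
      obtain ⟨a, b, haS, hbS, l, hl, hpos⟩ := rtg_exit hR (fun a => a ∈ S) hi₀ hj₀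
      exact ⟨a, haS, b, hbS, l, hl, hpos⟩
    case hx =>
      intro ρ i'
      show v (r + (ρ+1)) i' = ∑ b, W (s + r + ρ) i' b * v (r + ρ) b
      have := hvrec (r + ρ) i'
      rw [show r + ρ + 1 = r + (ρ + 1) by omega] at this
      rw [this]
      apply Finset.sum_congr rfl; intro b _
      rw [show s + (r + ρ) = s + r + ρ by omega]
    have hfac : (1 - 2*η/(N:ℝ)^2) * V r ≤ lam^2 * V r := by
      apply mul_le_mul_of_nonneg_right _ (hVnn r)
      rw [hlam]
      have hN2 : (0:ℝ) < (N:ℝ)^2 := by positivity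
      have h1 : 0 ≤ (η / (4 * (N:ℝ)^2))^2 := sq_nonneg _
      have h2 : (1 - η / (4 * (N:ℝ)^2))^2
          = 1 - 2*(η / (4 * (N:ℝ)^2)) + (η / (4 * (N:ℝ)^2))^2 := by ring
      rw [h2]
      have h3 : η / (4 * (N:ℝ)^2) ≤ η/(N:ℝ)^2 := by
        rw [div_le_div_iff₀ (by positivity) hN2]
        nlinarith
      have h4 : 2*η/(N:ℝ)^2 = 2*(η/(N:ℝ)^2) := by ring
      rw [h4]
      nlinarith [h3, h1]
    calc V (r + B) = ∑ i', (v (r + B) i')^2 := rfl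
      _ ≤ (1 - 2*η/(N:ℝ)^2) * ∑ i', (v (r + 0) i')^2 := by
          have := happ
          simpa using this
      _ = (1 - 2*η/(N:ℝ)^2) * V r := rfl
      _ ≤ lam^2 * V r := hfac
  have hiter : ∀ q : ℕ, V (q*B) ≤ (lam^2)^q * V 0 := by
    intro q
    induction q with
    | zero => simp
    | succ q ih =>
      have h1 : V ((q+1)*B) = V (q*B + B) := by ring_nf
      rw [h1]
      calc V (q*B + B) ≤ lam^2 * V (q*B) := hwin (q*B)
        _ ≤ lam^2 * ((lam^2)^q * V 0) := by
            apply mul_le_mul_of_nonneg_left ih (by positivity)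
        _ = (lam^2)^(q+1) * V 0 := by ring
  have hV0le : V 0 ≤ 1 := by
    rw [hV, hv]
    simp only
    have h0 : transMat W (s+0) s = 1 := by rw [transMat]; simp
    rw [h0]
    have hexp : ∀ i' : Fin N, ((1 : Matrix (Fin N) (Fin N) ℝ) i' j - 1/N)^2
        = ((1 : Matrix (Fin N) (Fin N) ℝ) i' j)^2
          - 2*(1/N)*((1 : Matrix (Fin N) (Fin N) ℝ) i' j) + (1/N)^2 := by
      intro i'; ring
    rw [Finset.sum_congr rfl fun i' _ => hexp i']
    rw [Finset.sum_add_distrib, Finset.sum_sub_distrib]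
    have e1 : ∑ i' : Fin N, ((1 : Matrix (Fin N) (Fin N) ℝ) i' j)^2 = 1 := by
      simp [Matrix.one_apply]
    have e2 : ∑ i' : Fin N, 2*(1/(N:ℝ))*((1 : Matrix (Fin N) (Fin N) ℝ) i' j)
        = 2*(1/(N:ℝ)) := by
      rw [← Finset.mul_sum]
      simp [Matrix.one_apply]
    have e3 : ∑ _i' : Fin N, (1/(N:ℝ))^2 = N * (1/(N:ℝ))^2 := by
      rw [Finset.sum_const, Finset.card_univ, Fintype.card_fin, nsmul_eq_mul]
    rw [e1, e2, e3]
    have hNne : (N:ℝ) ≠ 0 := by positivity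
    have : 1 - 2*(1/(N:ℝ)) + (N:ℝ)*(1/(N:ℝ))^2 = 1 - 1/(N:ℝ) := by
      field_simp
      ring
    rw [this]
    have : 0 < 1/(N:ℝ) := by positivity
    linarith
  set n := k - s with hn
  set q := n / B with hq
  have hVn : V n ≤ (lam^q)^2 := by
    calc V n ≤ V (q*B) := hVmono _ _ (Nat.div_mul_le_self n B)
      _ ≤ (lam^2)^q * V 0 := hiter q
      _ ≤ (lam^2)^q * 1 := by
          apply mul_le_mul_of_nonneg_left hV0le (by positivity)
      _ = (lam^q)^2 := by
          rw [mul_one, ← pow_mul, ← pow_mul, Nat.mul_comm]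
  have hgoal_lhs : transMat W k s i j - 1/(N:ℝ) = v n i := by
    rw [hv]
    simp only
    congr 2
    omega
  rw [hgoal_lhs]
  have habs : |v n i| ≤ lam^q := by
    have h1 : (v n i)^2 ≤ (lam^q)^2 := by
      calc (v n i)^2 ≤ V n := Finset.single_le_sum
            (f := fun i' => (v n i')^2) (fun i' _ => sq_nonneg _) (Finset.mem_univ i)
        _ ≤ (lam^q)^2 := hVn
    have h2 : |v n i| = Real.sqrt ((v n i)^2) := (Real.sqrt_sq_eq_abs _).symm
    rw [h2]
    calc Real.sqrt ((v n i)^2) ≤ Real.sqrt ((lam^q)^2) := Real.sqrt_le_sqrt h1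
      _ = lam^q := Real.sqrt_sq (by positivity)
  apply le_trans habs
  -- rewrite RHS as a real power of lam
  have hrhs : γ * β ^ n = lam ^ (((n:ℝ)/(B:ℝ)) + (-2 : ℝ)) := by
    rw [hγ, hβ]
    rw [← Real.rpow_natCast (lam ^ ((1:ℝ)/(B:ℝ))) n, ← Real.rpow_mul hlam_pos.le]
    rw [← Real.rpow_add hlam_pos]
    congr 1
    ring
  rw [hrhs]
  have hq_exp : ((n:ℝ)/(B:ℝ)) + (-2 : ℝ) ≤ (q:ℕ) := by
    have hlt : n < (q+1)*B := by
      rw [hq, Nat.add_mul, one_mul]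
      exact Nat.lt_div_mul_add hB
    have hltr : (n:ℝ) < ((q:ℝ)+1)*(B:ℝ) := by
      push_cast
      exact_mod_cast hlt
    have : (n:ℝ)/(B:ℝ) < (q:ℝ)+1 := by
      rw [div_lt_iff₀ hBr]
      linarith
    linarith
  calc lam^q = lam ^ ((q:ℕ):ℝ) := (Real.rpow_natCast lam q).symm
    _ ≤ lam ^ (((n:ℝ)/(B:ℝ)) + (-2 : ℝ)) :=
        Real.rpow_le_rpow_of_exponent_ge hlam_pos hlam_lt1.le hq_exp
end

section
/- Let {W_t}_{t≥1} be N×N doubly stochastic matrices with every nonzero entry at least η ∈ (0,1), diagonal entries at least η, and a B-strongly connected graph sequence. Let x_{i,t} ∈ ℝ^d satisfy x_{i,t+1} = Σ_{j=1}^N [W_t]_{ij} x_{j,t} + e_{i,t} where ‖e_{i,t}‖ ≤ η_t λ_t for positive scalars η_t, λ_t. Let x̄_t = (1/N)Σ_{i=1}^N x_{i,t} and R₁ = max_i ‖x_{i,1}‖. Then for all i ∈ [N] and t ≥ 1, ‖x_{i,t+1} − x̄_{t+1}‖ ≤ N γ β^t R₁ + N γ Σ_{l=1}^{t} β^{t−l}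 λ_l η_l, where γ = (1 − η/(4N²))^{−2} and β = (1 − η/(4N²))^{1/B}. -/
open Finset

lemma sum_sq_le_sq_sum_of_nonneg' {s : Finset ℕ} {f : ℕ → ℝ} (hf : ∀ i ∈ s, 0 ≤ f i) :
    ∑ i ∈ s, (f i)^2 ≤ (∑ i ∈ s, f i)^2 := by
  have h : ∀ i ∈ s, (f i)^2 ≤ f i * ∑ j ∈ s, f j := by
    intro i hi
    have h1 : f i ≤ ∑ j ∈ s, f j := Finset.single_le_sum hf hi
    have := mul_le_mul_of_nonneg_left h1 (hf i hi)
    simpa [sq] using this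
  calc ∑ i ∈ s, (f i)^2 ≤ ∑ i ∈ s, f i * ∑ j ∈ s, f j := Finset.sum_le_sum h
  _ = (∑ i ∈ s, f i)^2 := by rw [← Finset.sum_mul, sq]

lemma step_identity {N : ℕ} (M : Matrix (Fin N) (Fin N) ℝ)
    (hrow : ∀ i, ∑ j, M i j = 1) (hcol : ∀ j, ∑ i, M i j = 1) (z : Fin N → ℝ) :
    ∑ i, ∑ j, M i j * (z j - ∑ l, M i l * z l)^2
      = ∑ i, (z i)^2 - ∑ i, (∑ j, M i j * z j)^2 := by
  have key : ∀ i, ∑ j, M i j * (z j - ∑ l, M i l * z l)^2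
      = (∑ j, M i j * (z j)^2) - (∑ j, M i j * z j)^2 := by
    intro i
    set c := ∑ l, M i l * z l with hc
    calc ∑ j, M i j * (z j - c)^2
        = ∑ j, (M i j * (z j)^2 - 2*c*(M i j * z j) + c^2 * M i j) := by
          apply Finset.sum_congr rfl; intro j _; ring
      _ = (∑ j, M i j * (z j)^2) - 2*c*(∑ j, M i j * z j) + c^2 * (∑ j, M i j) := by
          rw [Finset.sum_add_distrib, Finset.sum_sub_distrib, ← Finset.mul_sum, ← Finset.mul_sum]
      _ = (∑ j, M i j * (z j)^2) - c^2 := by rw [hrow i, ← hc]; ring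
  rw [Finset.sum_congr rfl (fun i _ => key i), Finset.sum_sub_distrib]
  congr 1
  rw [Finset.sum_comm]
  apply Finset.sum_congr rfl
  intro j _
  rw [← Finset.sum_mul, hcol j, one_mul]

lemma step_upper {N : ℕ} (M : Matrix (Fin N) (Fin N) ℝ)
    (hnn : ∀ i j, 0 ≤ M i j) (hrow : ∀ i, ∑ j, M i j = 1)
    (z : Fin N → ℝ) (P : Fin N → Prop) (c : ℝ)
    (hcl : ∀ i j, P i → 0 < M i j → P j)
    (hub : ∀ j, P j → z j ≤ c) :
    ∀ i, P i → (∑ j, M i j * z j) ≤ c := by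
  intro i hi
  calc ∑ j, M i j * z j ≤ ∑ j, M i j * c := by
        apply Finset.sum_le_sum
        intro j _
        rcases eq_or_lt_of_le (hnn i j) with h | h
        · rw [← h]; simp
        · exact mul_le_mul_of_nonneg_left (hub j (hcl i j hi h)) (le_of_lt h)
    _ = c := by rw [← Finset.sum_mul, hrow i, one_mul]

lemma step_lower {N : ℕ} (M : Matrix (Fin N) (Fin N) ℝ)
    (hnn : ∀ i j, 0 ≤ M i j) (hrow : ∀ i, ∑ j, M i j = 1)
    (z : Fin N → ℝ) (P : Fin N → Prop) (c : ℝ)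
    (hcl : ∀ i j, P i → 0 < M i j → P j)
    (hlb : ∀ j, P j → c ≤ z j) :
    ∀ i, P i → c ≤ (∑ j, M i j * z j) := by
  intro i hi
  have h1 := step_upper M hnn hrow (fun j => - z j) P (-c) hcl (fun j hj => by simpa using hlb j hj) i hi
  have h2 : ∑ j, M i j * (- z j) = - ∑ j, M i j * z j := by
    rw [← Finset.sum_neg_distrib]; apply Finset.sum_congr rfl; intro j _; ring
  rw [h2] at h1; linarith

lemma exists_cross_edge {α : Type*} (rel : α → α → Prop) (r : α → ℕ) (k : ℕ) :
    ∀ a b : α, Relation.ReflTransGen rel a b → k < r a → r b ≤ k →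
      ∃ x y, rel x y ∧ k < r x ∧ r y ≤ k := by
  intro a b hab
  induction hab using Relation.ReflTransGen.head_induction_on with
  | refl => intro h1 h2; omega
  | head hxy _ ih =>
    rename_i x x' _
    intro hx hb
    by_cases h : r x' ≤ k
    · exact ⟨x, x', hxy, hx, h⟩
    · exact ih (by omega) hb

lemma mean_zero_sum_sq_le {N : ℕ} (hN : 0 < N) (y : Fin N → ℝ)
    (hmean : ∑ i, y i = 0) (w : ℕ → ℝ) (hw : Monotone w)
    (r : Fin N → ℕ) (hr : ∀ i, y i = w (r i)) (hrlt : ∀ i, r i ≤ N - 1) :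
    ∑ i, (y i)^2 ≤ ((N:ℝ)^2/2) * ∑ k ∈ range (N-1), (w (k+1) - w k)^2 := by
  set G := ∑ k ∈ range (N-1), (w (k+1) - w k)^2 with hG
  have hGnn : 0 ≤ G := Finset.sum_nonneg (fun k _ => sq_nonneg _)
  have expand : ∑ i : Fin N, ∑ j : Fin N, (y i - y j)^2 = 2 * N * ∑ i, (y i)^2 := by
    have key : ∀ i : Fin N, ∑ j : Fin N, (y i - y j)^2
        = (N:ℝ) * (y i)^2 - 2 * y i * (∑ j, y j) + ∑ j, (y j)^2 := by
      intro i
      have h2 : ∀ j : Fin N, (y i - y j)^2 = (y i)^2 - 2 * y i * y j + (y j)^2 := by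
        intro j; ring
      rw [Finset.sum_congr rfl (fun j _ => h2 j), Finset.sum_add_distrib,
        Finset.sum_sub_distrib, ← Finset.mul_sum]
      simp [Finset.sum_const, Finset.card_univ, mul_comm]
    rw [Finset.sum_congr rfl (fun i _ => key i), hmean]
    simp only [mul_zero, sub_zero]
    rw [Finset.sum_add_distrib, Finset.sum_const, Finset.card_univ, ← Finset.mul_sum,
      Fintype.card_fin, nsmul_eq_mul]
    ring
  have range_eq : w (N-1) - w 0 = ∑ k ∈ range (N-1), (w (k+1) - w k) :=
    (Finset.sum_range_sub w (N-1)).symm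
  have range_sq : (w (N-1) - w 0)^2 ≤ (N:ℝ) * G := by
    rw [range_eq]
    have cs := Finset.sum_mul_sq_le_sq_mul_sq (range (N-1)) (fun k => w (k+1) - w k) (fun _ => 1)
    simp only [mul_one, one_pow] at cs
    calc (∑ k ∈ range (N-1), (w (k+1) - w k))^2 ≤ G * ∑ k ∈ range (N-1), (1:ℝ) := cs
      _ = (N-1:ℕ) * G := by rw [Finset.sum_const, Finset.card_range]; simp [mul_comm]
      _ ≤ (N:ℝ) * G := by
          apply mul_le_mul_of_nonneg_right _ hGnn
          exact_mod_cast Nat.cast_le.mpr (Nat.sub_le N 1)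
  have each : ∀ i j : Fin N, (y i - y j)^2 ≤ (N:ℝ) * G := by
    intro i j
    have hb : ∀ i : Fin N, w 0 ≤ y i ∧ y i ≤ w (N-1) := by
      intro i
      rw [hr i]
      exact ⟨hw (Nat.zero_le _), hw (hrlt i)⟩
    have h1 := (hb i).1; have h2 := (hb i).2
    have h3 := (hb j).1; have h4 := (hb j).2
    have h5 : (y i - y j)^2 ≤ (w (N-1) - w 0)^2 := by
      apply sq_le_sq' <;> linarith
    linarith [range_sq]
  have total : ∑ i : Fin N, ∑ j : Fin N, (y i - y j)^2 ≤ (N:ℝ)^2 * ((N:ℝ) * G) := by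
    calc ∑ i : Fin N, ∑ j : Fin N, (y i - y j)^2
        ≤ ∑ _i : Fin N, ∑ _j : Fin N, (N:ℝ) * G := by
          apply Finset.sum_le_sum; intro i _; exact Finset.sum_le_sum (fun j _ => each i j)
      _ = (N:ℝ)^2 * ((N:ℝ) * G) := by
          simp [Finset.sum_const, Finset.card_univ, Fintype.card_fin]; ring
  rw [expand] at total
  have hNpos : (0:ℝ) < N := by exact_mod_cast hN
  nlinarith [total]

set_option maxHeartbeats 1000000 in
lemma scalar_contract {N B : ℕ} (hN : 0 < N) {η : ℝ} (hη0 : 0 < η) (hη1 : η ≤ 1)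
    (M : ℕ → Matrix (Fin N) (Fin N) ℝ)
    (hnn : ∀ m, m < B → ∀ i j, 0 ≤ M m i j)
    (hrow : ∀ m, m < B → ∀ i, ∑ j, M m i j = 1)
    (hcol : ∀ m, m < B → ∀ j, ∑ i, M m i j = 1)
    (hmin : ∀ m, m < B → ∀ i j, M m i j ≠ 0 → η ≤ M m i j)
    (hdiag : ∀ m, m < B → ∀ i, η ≤ M m i i)
    (hconn : ∀ i j : Fin N, Relation.ReflTransGen (fun a b => ∃ l, l < B ∧ 0 < M l a b) i j)
    (z : ℕ → Fin N → ℝ)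
    (hz : ∀ m, m < B → ∀ i, z (m+1) i = ∑ j, M m i j * z m j)
    (hmean : ∑ i, z 0 i = 0) :
    ∑ i, (z B i)^2 ≤ (1 - η/(2*(N:ℝ)^2)) * ∑ i, (z 0 i)^2 := by
  classical
  -- sorting
  set σ : Equiv.Perm (Fin N) := Tuple.sort (z 0) with hσ
  have hmono : Monotone (z 0 ∘ σ) := Tuple.monotone_sort (z 0)
  set r : Fin N → ℕ := fun i => ((σ.symm i : Fin N) : ℕ) with hrdef
  have hrlt : ∀ i, r i ≤ N - 1 := by
    intro i; have := (σ.symm i).isLt; simp only [hrdef]; omega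
  set w : ℕ → ℝ := fun k => z 0 (σ ⟨min k (N-1), by omega⟩) with hwdef
  have hw : Monotone w := by
    intro k k' hk
    exact hmono (by simp only [Fin.mk_le_mk]; omega)
  have hz0w : ∀ i, z 0 i = w (r i) := by
    intro i
    have h1 : (⟨min (r i) (N-1), by omega⟩ : Fin N) = σ.symm i := by
      apply Fin.ext
      simp only [hrdef]
      have := hrlt i
      simp only [hrdef] at this ⊢
      omega
    simp only [hwdef, h1, Equiv.apply_symm_apply]
  set g : ℕ → ℝ := fun k => w (k+1) - w k with hgdef
  have hg : ∀ k, 0 ≤ g k := fun k => sub_nonneg.mpr (hw (Nat.le_succ k))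
  -- crossing
  set crossAt : ℕ → ℕ → Prop :=
    fun m k => ∃ a b : Fin N, r b ≤ k ∧ k < r a ∧ (0 < M m b a ∨ 0 < M m a b) with hcrdef
  have hcrossex : ∀ k, k + 1 < N → ∃ m, m < B ∧ crossAt m k := by
    intro k hk
    have ha : r (σ ⟨N-1, by omega⟩) = N-1 := by simp [hrdef]
    have hb : r (σ ⟨0, hN⟩) = 0 := by simp [hrdef]
    obtain ⟨a', b', hrel, hx, hy⟩ := exists_cross_edge (fun a b => ∃ l, l < B ∧ 0 < M l a b) r k
      _ _ (hconn (σ ⟨N-1, by omega⟩) (σ ⟨0, hN⟩)) (by omega) (by omega)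
    obtain ⟨l, hl, hpos⟩ := hrel
    exact ⟨l, hl, a', b', hy, hx, Or.inr hpos⟩
  set fc : ℕ → ℕ := fun k => if h : ∃ m, m < B ∧ crossAt m k then Nat.find h else 0 with hfcdef
  have hfc : ∀ k, k + 1 < N → fc k < B ∧ crossAt (fc k) k ∧ ∀ m' , m' < fc k → ¬ crossAt m' k := by
    intro k hk
    have h := hcrossex k hk
    simp only [hfcdef, dif_pos h]
    refine ⟨(Nat.find_spec h).1, (Nat.find_spec h).2, ?_⟩
    intro m' hm'
    have := Nat.find_min h hm'
    push_neg at this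
    intro hc
    have : ¬ (m' < B) := fun hb => (this hb) hc
    have hb : m' < B := lt_trans hm' (Nat.find_spec h).1
    exact this hb
  -- invariant
  have hINV : ∀ k m, m ≤ B → (∀ m', m' < m → ¬ crossAt m' k) →
      (∀ i, r i ≤ k → z m i ≤ w k) ∧ (∀ i, k < r i → w (k+1) ≤ z m i) := by
    intro k m
    induction m with
    | zero =>
      intro _ _
      constructor
      · intro i hi; rw [hz0w i]; exact hw hi
      · intro i hi; rw [hz0w i]; exact hw hi
    | succ m ih =>
      intro hmB hunc
      have hmB' : m < B := by omega
      have ihh := ih (by omega) (fun m' h => hunc m' (by omega))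
      have hnc : ¬ crossAt m k := hunc m (Nat.lt_succ_self m)
      constructor
      · intro i hi
        rw [hz m hmB' i]
        refine step_upper (M m) (hnn m hmB') (hrow m hmB') (z m) (fun i => r i ≤ k) (w k)
          ?_ ihh.1 i hi
        intro a b hPa hM
        by_contra hb
        exact hnc ⟨b, a, hPa, by omega, Or.inl hM⟩
      · intro i hi
        rw [hz m hmB' i]
        refine step_lower (M m) (hnn m hmB') (hrow m hmB') (z m) (fun i => k < r i) (w (k+1))
          ?_ ihh.2 i hi
        intro a b hPa hM
        by_contra hb
        exact hnc ⟨a, b, by omega, hPa, Or.inr hM⟩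

  -- decrease per step and telescoping
  have tele : ∑ m ∈ range B, ((∑ i, (z m i)^2) - ∑ i, (z (m+1) i)^2)
      = (∑ i, (z 0 i)^2) - ∑ i, (z B i)^2 := by
    have h := Finset.sum_range_sub (fun m => ∑ i, (z m i)^2) B
    have h2 : ∑ m ∈ range B, ((∑ i, (z m i)^2) - ∑ i, (z (m+1) i)^2)
        = -∑ m ∈ range B, ((∑ i, (z (m+1) i)^2) - ∑ i, (z m i)^2) := by
      rw [← Finset.sum_neg_distrib]; apply Finset.sum_congr rfl; intro m _; ring
    rw [h2, h]; ring
  -- the key per-step charging bound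
  have key : ∀ m, m < B → (η/4) * ∑ k ∈ (range (N-1)).filter (fun k => fc k = m), (g k)^2
      ≤ (∑ i, (z m i)^2) - ∑ i, (z (m+1) i)^2 := by
    intro m hm
    set K := (range (N-1)).filter (fun k => fc k = m) with hKdef
    have hKfacts : ∀ k ∈ K, k + 1 < N ∧ crossAt m k ∧ (∀ m', m' < m → ¬ crossAt m' k) := by
      intro k hk
      rw [hKdef, Finset.mem_filter, Finset.mem_range] at hk
      obtain ⟨hk1, hk2⟩ := hk
      have hk1' : k + 1 < N := by omega
      have h := hfc k hk1'
      rw [hk2] at h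
      exact ⟨hk1', h.2.1, h.2.2⟩
    set row : Fin N → ℝ := fun u => ∑ j, M m u j * (z m j - z (m+1) u)^2 with hrowdef
    have hrow_nn : ∀ u, 0 ≤ row u :=
      fun u => Finset.sum_nonneg (fun j _ => mul_nonneg (hnn m hm u j) (sq_nonneg _))
    have iden : ∑ u, row u = (∑ i, (z m i)^2) - ∑ i, (z (m+1) i)^2 := by
      have h := step_identity (M m) (hrow m hm) (hcol m hm) (z m)
      have h2 : ∑ u, row u = ∑ i, ∑ j, M m i j * (z m j - ∑ l, M m i l * z m l)^2 := by
        apply Finset.sum_congr rfl; intro u _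
        simp only [hrowdef]
        apply Finset.sum_congr rfl; intro j _
        rw [hz m hm u]
      rw [h2, h]
      congr 1
      apply Finset.sum_congr rfl; intro i _
      rw [hz m hm i]
    set GOOD : ℕ → (Fin N × Fin N × Bool) → Prop := fun k p =>
      0 < M m p.1 p.2.1 ∧ p.1 ≠ p.2.1 ∧
        (if p.2.2 then r p.1 ≤ k ∧ k < r p.2.1 else r p.2.1 ≤ k ∧ k < r p.1) with hGOODdef
    have hchoice : ∀ k ∈ K, ∃ p, GOOD k p := by
      intro k hk
      obtain ⟨_, hcr, _⟩ := hKfacts k hk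
      obtain ⟨a, b, hb, ha, hor⟩ := hcr
      have hba : b ≠ a := by intro he; rw [he] at hb; omega
      have hab : a ≠ b := Ne.symm hba
      rcases hor with h | h
      · exact ⟨(b, a, true), by simp only [hGOODdef]; simp [hb, ha, h, hba]⟩
      · exact ⟨(a, b, false), by simp only [hGOODdef]; simp [hb, ha, h, hab]⟩
    set pick : ℕ → Fin N × Fin N × Bool := fun k =>
      if h : ∃ p, GOOD k p then h.choose else (⟨0, hN⟩, ⟨0, hN⟩, true) with hpickdef
    have hpick : ∀ k ∈ K, GOOD k (pick k) := by
      intro k hk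
      have h := hchoice k hk
      simp only [hpickdef, dif_pos h]
      exact h.choose_spec
    have hINVK : ∀ k ∈ K, (∀ i, r i ≤ k → z m i ≤ w k) ∧ (∀ i, k < r i → w (k+1) ≤ z m i) := by
      intro k hk
      obtain ⟨h1, h2, h3⟩ := hKfacts k hk
      exact hINV k m (le_of_lt hm) h3
    have sideb : ∀ sd : Bool,
        ∑ k ∈ K.filter (fun k => (pick k).2.2 = sd), (g k)^2
          ≤ (2/η) * ((∑ i, (z m i)^2) - ∑ i, (z (m+1) i)^2) := by
      intro sd
      set Ks := K.filter (fun k => (pick k).2.2 = sd) with hKs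
      have hmaps : ∀ k ∈ Ks, (pick k).1 ∈ Ks.image (fun k => (pick k).1) :=
        fun k hk => Finset.mem_image_of_mem _ hk
      rw [← Finset.sum_fiberwise_of_maps_to hmaps (fun k => (g k)^2)]
      have fiberb : ∀ u ∈ Ks.image (fun k => (pick k).1),
          ∑ k ∈ Ks.filter (fun k => (pick k).1 = u), (g k)^2 ≤ (2/η) * row u := by
        intro u hu
        set F := Ks.filter (fun k => (pick k).1 = u) with hF
        have hne : F.Nonempty := by
          rw [Finset.mem_image] at hu
          obtain ⟨k, hk, hku⟩ := hu
          exact ⟨k, by rw [hF, Finset.mem_filter]; exact ⟨hk, hku⟩⟩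
        have hFK : ∀ k ∈ F, k ∈ K := by
          intro k hk
          rw [hF, Finset.mem_filter, hKs, Finset.mem_filter] at hk
          exact hk.1.1
        have hFgood : ∀ k ∈ F, 0 < M m u (pick k).2.1 ∧ u ≠ (pick k).2.1 ∧
            (if sd then r u ≤ k ∧ k < r (pick k).2.1 else r (pick k).2.1 ≤ k ∧ k < r u) := by
          intro k hk
          have hkK := hFK k hk
          have hgk := hpick k hkK
          rw [hF, Finset.mem_filter] at hk
          have h1 : (pick k).1 = u := hk.2
          have h2 : (pick k).2.2 = sd := by
            have := hk.1
            rw [hKs, Finset.mem_filter] at this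
            exact this.2
          rw [hGOODdef] at hgk
          rw [h1, h2] at hgk
          exact hgk
        set k0 := F.min' hne with hk0
        set k1 := F.max' hne with hk1
        have hk0F : k0 ∈ F := F.min'_mem hne
        have hk1F : k1 ∈ F := F.max'_mem hne
        have hgsum : ∑ k ∈ F, g k ≤ w (k1+1) - w k0 := by
          have hsub : F ⊆ Finset.Icc k0 k1 := by
            intro k hk; rw [Finset.mem_Icc]; exact ⟨F.min'_le k hk, F.le_max' k hk⟩
          have h1 : ∑ k ∈ F, g k ≤ ∑ k ∈ Finset.Icc k0 k1, g k :=
            Finset.sum_le_sum_of_subset_of_nonneg hsub (fun k _ _ => hg k)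
          have hk01 : k0 ≤ k1 + 1 := by have := F.min'_le k1 hk1F; omega
          have h2 : ∑ k ∈ Finset.Icc k0 k1, g k = w (k1+1) - w k0 := by
            rw [← Finset.Ico_add_one_right_eq_Icc, Finset.sum_Ico_eq_sub _ hk01]
            simp only [hgdef]
            rw [Finset.sum_range_sub w, Finset.sum_range_sub w]
            ring
          linarith
        have hgsum0 : 0 ≤ ∑ k ∈ F, g k := Finset.sum_nonneg (fun k _ => hg k)
        have hssq : ∑ k ∈ F, (g k)^2 ≤ (∑ k ∈ F, g k)^2 :=
          sum_sq_le_sq_sum_of_nonneg' (fun k _ => hg k)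
        -- choose source depending on side
        rcases sd with _ | _
        · -- sd = false : u is on the high side, source is low, taken from the smallest cut
          simp only [if_false, Bool.false_eq_true] at hFgood
          have hg0 := hFgood k0 hk0F
          have hg1 := hFgood k1 hk1F
          obtain ⟨src, hsrc⟩ : ∃ s, s = (pick k0).2.1 := ⟨_, rfl⟩
          rw [← hsrc] at hg0
          have hMusrc : 0 < M m u src := hg0.1
          have hnesrc : u ≠ src := hg0.2.1
          have hsrclow : r src ≤ k0 := hg0.2.2.1
          have huhigh : k1 < r u := hg1.2.2.2
          have hzu : w (k1+1) ≤ z m u := (hINVK k1 (hFK k1 hk1F)).2 u huhigh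
          have hzsrc : z m src ≤ w k0 := (hINVK k0 (hFK k0 hk0F)).1 src hsrclow
          have hsq : (∑ k ∈ F, g k)^2 ≤ (z m u - z m src)^2 := by
            apply sq_le_sq' <;> [linarith; linarith]
          have hrowlb : η * ((z m src - z (m+1) u)^2 + (z m u - z (m+1) u)^2) ≤ row u := by
            have h1 : ∑ j ∈ ({src, u} : Finset (Fin N)), M m u j * (z m j - z (m+1) u)^2 ≤ row u := by
              simp only [hrowdef]
              exact Finset.sum_le_sum_of_subset_of_nonneg (Finset.subset_univ _)
                (fun j _ _ => mul_nonneg (hnn m hm u j) (sq_nonneg _))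
            rw [Finset.sum_pair (Ne.symm hnesrc)] at h1
            have ha : η ≤ M m u src := hmin m hm u src (ne_of_gt hMusrc)
            have hb : η ≤ M m u u := hdiag m hm u
            nlinarith [sq_nonneg (z m src - z (m+1) u), sq_nonneg (z m u - z (m+1) u)]
          have hquad : (z m u - z m src)^2
              ≤ 2*((z m src - z (m+1) u)^2 + (z m u - z (m+1) u)^2) := by
            nlinarith [sq_nonneg ((z m src - z (m+1) u) + (z m u - z (m+1) u))]
          have hX : 0 ≤ (z m src - z (m+1) u)^2 + (z m u - z (m+1) u)^2 := by positivity
          calc ∑ k ∈ F, (g k)^2 ≤ (∑ k ∈ F, g k)^2 := hssq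
            _ ≤ (z m u - z m src)^2 := hsq
            _ ≤ 2*((z m src - z (m+1) u)^2 + (z m u - z (m+1) u)^2) := hquad
            _ = (2/η) * (η * ((z m src - z (m+1) u)^2 + (z m u - z (m+1) u)^2)) := by
                field_simp
            _ ≤ (2/η) * row u := by
                apply mul_le_mul_of_nonneg_left hrowlb
                positivity
        · -- sd = true : u is on the low side, source is high, taken from the largest cut
          simp only [if_true] at hFgood
          have hg0 := hFgood k0 hk0F
          have hg1 := hFgood k1 hk1F
          obtain ⟨src, hsrc⟩ : ∃ s, s = (pick k1).2.1 := ⟨_, rfl⟩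
          rw [← hsrc] at hg1
          have hMusrc : 0 < M m u src := hg1.1
          have hnesrc : u ≠ src := hg1.2.1
          have hsrchigh : k1 < r src := hg1.2.2.2
          have hulow : r u ≤ k0 := hg0.2.2.1
          have hzu : z m u ≤ w k0 := (hINVK k0 (hFK k0 hk0F)).1 u hulow
          have hzsrc : w (k1+1) ≤ z m src := (hINVK k1 (hFK k1 hk1F)).2 src hsrchigh
          have hsq : (∑ k ∈ F, g k)^2 ≤ (z m src - z m u)^2 := by
            apply sq_le_sq' <;> [linarith; linarith]
          have hrowlb : η * ((z m src - z (m+1) u)^2 + (z m u - z (m+1) u)^2) ≤ row u := by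
            have h1 : ∑ j ∈ ({src, u} : Finset (Fin N)), M m u j * (z m j - z (m+1) u)^2 ≤ row u := by
              simp only [hrowdef]
              exact Finset.sum_le_sum_of_subset_of_nonneg (Finset.subset_univ _)
                (fun j _ _ => mul_nonneg (hnn m hm u j) (sq_nonneg _))
            rw [Finset.sum_pair (Ne.symm hnesrc)] at h1
            have ha : η ≤ M m u src := hmin m hm u src (ne_of_gt hMusrc)
            have hb : η ≤ M m u u := hdiag m hm u
            nlinarith [sq_nonneg (z m src - z (m+1) u), sq_nonneg (z m u - z (m+1) u)]
          have hquad : (z m src - z m u)^2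
              ≤ 2*((z m src - z (m+1) u)^2 + (z m u - z (m+1) u)^2) := by
            nlinarith [sq_nonneg ((z m src - z (m+1) u) + (z m u - z (m+1) u))]
          calc ∑ k ∈ F, (g k)^2 ≤ (∑ k ∈ F, g k)^2 := hssq
            _ ≤ (z m src - z m u)^2 := hsq
            _ ≤ 2*((z m src - z (m+1) u)^2 + (z m u - z (m+1) u)^2) := hquad
            _ = (2/η) * (η * ((z m src - z (m+1) u)^2 + (z m u - z (m+1) u)^2)) := by
                field_simp
            _ ≤ (2/η) * row u := by
                apply mul_le_mul_of_nonneg_left hrowlb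
                positivity
      calc ∑ u ∈ Ks.image (fun k => (pick k).1),
            ∑ k ∈ Ks.filter (fun k => (pick k).1 = u), (g k)^2
          ≤ ∑ u ∈ Ks.image (fun k => (pick k).1), (2/η) * row u := Finset.sum_le_sum fiberb
        _ ≤ ∑ u : Fin N, (2/η) * row u := by
            apply Finset.sum_le_sum_of_subset_of_nonneg (Finset.subset_univ _)
            intro u _ _
            exact mul_nonneg (by positivity) (hrow_nn u)
        _ = (2/η) * ∑ u, row u := by rw [Finset.mul_sum]
        _ = (2/η) * ((∑ i, (z m i)^2) - ∑ i, (z (m+1) i)^2) := by rw [iden]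
    have h1 := sideb true
    have h2 := sideb false
    have hsplit : ∑ k ∈ K, (g k)^2
        = (∑ k ∈ K.filter (fun k => (pick k).2.2 = true), (g k)^2)
          + ∑ k ∈ K.filter (fun k => (pick k).2.2 = false), (g k)^2 := by
      rw [← Finset.sum_filter_add_sum_filter_not K (fun k => (pick k).2.2 = true)]
      congr 1
      apply Finset.sum_congr _ (fun _ _ => rfl)
      apply Finset.filter_congr
      intro k _
      cases h : (pick k).2.2 <;> simp
    have hdec0 : 0 ≤ (∑ i, (z m i)^2) - ∑ i, (z (m+1) i)^2 := by
      rw [← iden]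
      exact Finset.sum_nonneg (fun u _ => hrow_nn u)
    have htot : ∑ k ∈ K, (g k)^2 ≤ (4/η) * ((∑ i, (z m i)^2) - ∑ i, (z (m+1) i)^2) := by
      rw [hsplit]
      have : (4/η) * ((∑ i, (z m i)^2) - ∑ i, (z (m+1) i)^2)
          = (2/η) * ((∑ i, (z m i)^2) - ∑ i, (z (m+1) i)^2)
            + (2/η) * ((∑ i, (z m i)^2) - ∑ i, (z (m+1) i)^2) := by ring
      rw [this]
      exact add_le_add h1 h2
    calc (η/4) * ∑ k ∈ K, (g k)^2
        ≤ (η/4) * ((4/η) * ((∑ i, (z m i)^2) - ∑ i, (z (m+1) i)^2)) := by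
          apply mul_le_mul_of_nonneg_left htot; positivity
      _ = (∑ i, (z m i)^2) - ∑ i, (z (m+1) i)^2 := by
          field_simp
  -- summing the charges
  have charge : (η/4) * ∑ k ∈ range (N-1), (g k)^2
      ≤ (∑ i, (z 0 i)^2) - ∑ i, (z B i)^2 := by
    have hmaps : ∀ k ∈ range (N-1), fc k ∈ range B := by
      intro k hk
      rw [Finset.mem_range] at hk ⊢
      exact (hfc k (by omega)).1
    have hpart : ∑ k ∈ range (N-1), (g k)^2
        = ∑ m ∈ range B, ∑ k ∈ (range (N-1)).filter (fun k => fc k = m), (g k)^2 :=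
      (Finset.sum_fiberwise_of_maps_to hmaps (fun k => (g k)^2)).symm
    rw [hpart, Finset.mul_sum]
    calc ∑ m ∈ range B, (η/4) * ∑ k ∈ (range (N-1)).filter (fun k => fc k = m), (g k)^2
        ≤ ∑ m ∈ range B, ((∑ i, (z m i)^2) - ∑ i, (z (m+1) i)^2) :=
          Finset.sum_le_sum (fun m hm => key m (Finset.mem_range.mp hm))
      _ = (∑ i, (z 0 i)^2) - ∑ i, (z B i)^2 := tele
  have S0b := mean_zero_sum_sq_le hN (z 0) hmean w hw r hz0w hrlt
  have hsum_eq : ∑ k ∈ range (N-1), (w (k+1) - w k)^2 = ∑ k ∈ range (N-1), (g k)^2 := by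
    apply Finset.sum_congr rfl; intro k _; simp only [hgdef]
  rw [hsum_eq] at S0b
  have hN2 : (0:ℝ) < (N:ℝ)^2 := by positivity
  have hfrac : η/(2*(N:ℝ)^2) * (∑ i, (z 0 i)^2) ≤ (η/4) * ∑ k ∈ range (N-1), (g k)^2 := by
    rw [div_mul_eq_mul_div, div_le_iff₀ (by positivity : (0:ℝ) < 2*(N:ℝ)^2)]
    have h := mul_le_mul_of_nonneg_left S0b (le_of_lt hη0)
    calc η * (∑ i, (z 0 i)^2) ≤ η * ((N:ℝ)^2/2 * ∑ k ∈ range (N-1), (g k)^2) := h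
      _ = (η/4) * (∑ k ∈ range (N-1), (g k)^2) * (2*(N:ℝ)^2) := by ring
  have goal : ∑ i, (z B i)^2 ≤ (∑ i, (z 0 i)^2) - η/(2*(N:ℝ)^2) * (∑ i, (z 0 i)^2) := by
    linarith [charge, hfrac]
  calc ∑ i, (z B i)^2 ≤ (∑ i, (z 0 i)^2) - η/(2*(N:ℝ)^2) * (∑ i, (z 0 i)^2) := goal
    _ = (1 - η/(2*(N:ℝ)^2)) * ∑ i, (z 0 i)^2 := by ring


variable {N d : ℕ}

noncomputable abbrev stk {N d : ℕ} (y : Fin N → EuclideanSpace ℝ (Fin d)) :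
    PiLp 2 (fun _ : Fin N => EuclideanSpace ℝ (Fin d)) := WithLp.toLp 2 y

lemma stk_norm (y : Fin N → EuclideanSpace ℝ (Fin d)) :
    ‖stk y‖ = Real.sqrt (∑ i, ‖y i‖^2) := PiLp.norm_eq_of_L2 _

lemma stk_norm_sq (y : Fin N → EuclideanSpace ℝ (Fin d)) :
    ‖stk y‖^2 = ∑ i, ∑ k, (y i k)^2 := by
  rw [stk_norm, Real.sq_sqrt (Finset.sum_nonneg (fun i _ => sq_nonneg _))]
  apply Finset.sum_congr rfl
  intro i _
  rw [EuclideanSpace.norm_eq, Real.sq_sqrt (Finset.sum_nonneg (fun k _ => sq_nonneg _))]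
  apply Finset.sum_congr rfl
  intro k _
  rw [Real.norm_eq_abs, sq_abs]

lemma coord_sum (s : Finset (Fin N)) (c : Fin N → ℝ) (v : Fin N → EuclideanSpace ℝ (Fin d)) (k : Fin d) :
    (∑ j ∈ s, c j • v j) k = ∑ j ∈ s, c j * v j k := by
  induction s using Finset.induction with
  | empty => rfl
  | @insert a s' hj ih => rw [Finset.sum_insert hj, Finset.sum_insert hj, ← ih]; rfl

lemma coord_sub (a b : EuclideanSpace ℝ (Fin d)) (k : Fin d) : (a - b) k = a k - b k := rfl

lemma stk_single_le (y : Fin N → EuclideanSpace ℝ (Fin d)) (i : Fin N) :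
    ‖y i‖ ≤ ‖stk y‖ := by
  rw [stk_norm]
  have h1 : ‖y i‖^2 ≤ ∑ j, ‖y j‖^2 :=
    Finset.single_le_sum (fun j _ => sq_nonneg (‖y j‖)) (Finset.mem_univ i)
  have := Real.sqrt_le_sqrt h1
  rwa [Real.sqrt_sq (norm_nonneg _)] at this

lemma stk_le_sqrt_card {C : ℝ} (hC : 0 ≤ C) (y : Fin N → EuclideanSpace ℝ (Fin d))
    (h : ∀ i, ‖y i‖ ≤ C) : ‖stk y‖ ≤ Real.sqrt N * C := by
  rw [stk_norm]
  have h1 : ∑ i, ‖y i‖^2 ≤ (N:ℝ) * C^2 := by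
    calc ∑ i, ‖y i‖^2 ≤ ∑ _i : Fin N, C^2 :=
      Finset.sum_le_sum (fun i _ => by nlinarith [h i, norm_nonneg (y i)])
    _ = (N:ℝ) * C^2 := by simp [Finset.sum_const, Finset.card_univ]
  calc Real.sqrt (∑ i, ‖y i‖^2) ≤ Real.sqrt ((N:ℝ) * C^2) := Real.sqrt_le_sqrt h1
    _ = Real.sqrt N * C := by
        rw [Real.sqrt_mul (Nat.cast_nonneg N), Real.sqrt_sq hC]

lemma proj_mean_le (hN : 0 < N) (v : Fin N → EuclideanSpace ℝ (Fin d)) :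
    ∑ i, ‖v i - (N:ℝ)⁻¹ • ∑ j, v j‖^2 ≤ ∑ i, ‖v i‖^2 := by
  set c : EuclideanSpace ℝ (Fin d) := (N:ℝ)⁻¹ • ∑ j, v j with hc
  have hNsmul : (N:ℝ) • c = ∑ j, v j := by
    rw [hc, smul_smul, mul_inv_cancel₀ (by exact_mod_cast hN.ne' : (N:ℝ) ≠ 0), one_smul]
  have hexp : ∀ i, ‖v i - c‖^2 = ‖v i‖^2 - 2 * inner ℝ (v i) c + ‖c‖^2 :=
    fun i => norm_sub_sq_real (v i) c
  rw [Finset.sum_congr rfl (fun i _ => hexp i), Finset.sum_add_distrib, Finset.sum_sub_distrib]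
  have hsin : ∑ i, (2 * inner ℝ (v i) c : ℝ) = 2 * ((N:ℝ) * ‖c‖^2) := by
    rw [← Finset.mul_sum, ← sum_inner, ← hNsmul, real_inner_smul_left,
      real_inner_self_eq_norm_sq]
  rw [hsin]
  have : ∑ _i : Fin N, ‖c‖^2 = (N:ℝ) * ‖c‖^2 := by simp [Finset.sum_const, Finset.card_univ]
  rw [this]
  have hN' : (0:ℝ) ≤ (N:ℝ) := Nat.cast_nonneg N
  nlinarith [sq_nonneg ‖c‖]

lemma scalar_nonexpansive {N : ℕ} (M : Matrix (Fin N) (Fin N) ℝ)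
    (hnn : ∀ i j, 0 ≤ M i j) (hrow : ∀ i, ∑ j, M i j = 1) (hcol : ∀ j, ∑ i, M i j = 1)
    (z : Fin N → ℝ) : ∑ i, (∑ j, M i j * z j)^2 ≤ ∑ i, (z i)^2 := by
  have h := step_identity M hrow hcol z
  have h2 : 0 ≤ ∑ i, ∑ j, M i j * (z j - ∑ l, M i l * z l)^2 :=
    Finset.sum_nonneg (fun i _ => Finset.sum_nonneg
      (fun j _ => mul_nonneg (hnn i j) (sq_nonneg _)))
  linarith

lemma stk_step_nonexpansive {N d : ℕ} (M : Matrix (Fin N) (Fin N) ℝ)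
    (hnn : ∀ i j, 0 ≤ M i j) (hrow : ∀ i, ∑ j, M i j = 1) (hcol : ∀ j, ∑ i, M i j = 1)
    (y : Fin N → EuclideanSpace ℝ (Fin d)) :
    ‖stk (fun i => ∑ j, M i j • y j)‖ ≤ ‖stk y‖ := by
  have hsq : ‖stk (fun i => ∑ j, M i j • y j)‖^2 ≤ ‖stk y‖^2 := by
    rw [stk_norm_sq, stk_norm_sq]
    rw [Finset.sum_comm, Finset.sum_comm (s := univ) (t := univ) (f := fun i k => (y i k)^2)]
    apply Finset.sum_le_sum
    intro k _
    have := scalar_nonexpansive M hnn hrow hcol (fun i => y i k)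
    calc ∑ i, ((∑ j, M i j • y j) k)^2 = ∑ i, (∑ j, M i j * y j k)^2 := by
          apply Finset.sum_congr rfl; intro i _; rw [coord_sum]
      _ ≤ ∑ i, (y i k)^2 := this
  have h1 := Real.sqrt_le_sqrt hsq
  rwa [Real.sqrt_sq (norm_nonneg _), Real.sqrt_sq (norm_nonneg _)] at h1

lemma block_contract {N B d : ℕ} (hN : 0 < N) {η : ℝ} (hη0 : 0 < η) (hη1 : η ≤ 1)
    (M : ℕ → Matrix (Fin N) (Fin N) ℝ)
    (hnn : ∀ m, m < B → ∀ i j, 0 ≤ M m i j)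
    (hrow : ∀ m, m < B → ∀ i, ∑ j, M m i j = 1)
    (hcol : ∀ m, m < B → ∀ j, ∑ i, M m i j = 1)
    (hmin : ∀ m, m < B → ∀ i j, M m i j ≠ 0 → η ≤ M m i j)
    (hdiag : ∀ m, m < B → ∀ i, η ≤ M m i i)
    (hconn : ∀ i j : Fin N, Relation.ReflTransGen (fun a b => ∃ l, l < B ∧ 0 < M l a b) i j)
    (y : ℕ → Fin N → EuclideanSpace ℝ (Fin d))
    (hy : ∀ m, m < B → ∀ i, y (m+1) i = ∑ j, M m i j • y m j)
    (hmean : ∑ i, y 0 i = 0) :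
    ‖stk (y B)‖ ≤ (1 - η/(4*(N:ℝ)^2)) * ‖stk (y 0)‖ := by
  have hN2 : (0:ℝ) < (N:ℝ)^2 := by positivity
  have hsq : ‖stk (y B)‖^2 ≤ (1 - η/(2*(N:ℝ)^2)) * ‖stk (y 0)‖^2 := by
    rw [stk_norm_sq, stk_norm_sq]
    rw [Finset.sum_comm, Finset.sum_comm (s := univ) (t := univ) (f := fun i k => (y 0 i k)^2)]
    rw [Finset.mul_sum]
    apply Finset.sum_le_sum
    intro k _
    have hmickey : ∑ i, y 0 i k = 0 := by
      have h0 : (∑ i, y 0 i) k = ∑ i, y 0 i k := by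
        simpa using coord_sum univ (fun _ => (1:ℝ)) (y 0) k
      rw [← h0, hmean]
      rfl
    exact scalar_contract hN hη0 hη1 M hnn hrow hcol hmin hdiag hconn
      (fun m i => y m i k)
      (fun m hm i => by
        show y (m+1) i k = ∑ j, M m i j * y m j k
        rw [hy m hm i, coord_sum]) hmickey
  have hδ2 : 0 ≤ 1 - η/(2*(N:ℝ)^2) := by
    have h4 : (4:ℝ) ≤ 4*(N:ℝ)^2 := by nlinarith [(by exact_mod_cast hN : (1:ℝ) ≤ (N:ℝ))]
    have : η/(2*(N:ℝ)^2) ≤ 1 := by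
      rw [div_le_one (by positivity)]
      nlinarith [(by exact_mod_cast hN : (1:ℝ) ≤ (N:ℝ))]
    linarith
  have hfac : (1 - η/(2*(N:ℝ)^2)) ≤ (1 - η/(4*(N:ℝ)^2))^2 := by
    have : (1 - η/(4*(N:ℝ)^2))^2 = 1 - η/(2*(N:ℝ)^2) + (η/(4*(N:ℝ)^2))^2 := by ring
    nlinarith [sq_nonneg (η/(4*(N:ℝ)^2))]
  have hδpos : 0 ≤ 1 - η/(4*(N:ℝ)^2) := by
    have : η/(4*(N:ℝ)^2) ≤ 1 := by
      rw [div_le_one (by positivity)]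
      nlinarith [(by exact_mod_cast hN : (1:ℝ) ≤ (N:ℝ))]
    linarith
  have h2 : ‖stk (y B)‖^2 ≤ ((1 - η/(4*(N:ℝ)^2)) * ‖stk (y 0)‖)^2 := by
    calc ‖stk (y B)‖^2 ≤ (1 - η/(2*(N:ℝ)^2)) * ‖stk (y 0)‖^2 := hsq
      _ ≤ (1 - η/(4*(N:ℝ)^2))^2 * ‖stk (y 0)‖^2 :=
          mul_le_mul_of_nonneg_right hfac (sq_nonneg _)
      _ = ((1 - η/(4*(N:ℝ)^2)) * ‖stk (y 0)‖)^2 := by ring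
  have h3 := Real.sqrt_le_sqrt h2
  rwa [Real.sqrt_sq (norm_nonneg _), Real.sqrt_sq (mul_nonneg hδpos (norm_nonneg _))] at h3

lemma stk_norm_sq2 {N d : ℕ} (y : Fin N → EuclideanSpace ℝ (Fin d)) :
    ‖stk y‖^2 = ∑ i, ‖y i‖^2 := by
  rw [stk_norm, Real.sq_sqrt (Finset.sum_nonneg (fun i _ => sq_nonneg _))]

lemma le_of_sq_le_sq' {a b : ℝ} (ha : 0 ≤ a) (hb : 0 ≤ b) (h : a^2 ≤ b^2) : a ≤ b := by
  nlinarith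


set_option maxHeartbeats 1000000 in
theorem stmt1 {N B d : ℕ} (hN : 0 < N) (hB : 0 < B) {η : ℝ} (hη : η ∈ Set.Ioo (0:ℝ) 1)
    (W : ℕ → Matrix (Fin N) (Fin N) ℝ)
    (hds : ∀ t, 1 ≤ t → IsDoublyStochasticMat (W t))
    (hmin : ∀ t, 1 ≤ t → ∀ i j, W t i j ≠ 0 → η ≤ W t i j)
    (hdiag : ∀ t, 1 ≤ t → ∀ i, η ≤ W t i i)
    (hconn : BStronglyConnectedSeq W B)
    (γ β : ℝ)
    (hγ : γ = (1 - η / (4 * (N:ℝ)^2)) ^ (-2 : ℝ))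
    (hβ : β = (1 - η / (4 * (N:ℝ)^2)) ^ ((1:ℝ) / (B:ℝ)))
    (ηs lam : ℕ → ℝ)
    (hηs : ∀ t, 1 ≤ t → 0 < ηs t) (hlam : ∀ t, 1 ≤ t → 0 < lam t)
    (x e : ℕ → Fin N → EuclideanSpace ℝ (Fin d))
    (hrec : ∀ t, 1 ≤ t → ∀ i, x (t+1) i = (∑ j, W t i j • x t j) + e t i)
    (he : ∀ t, 1 ≤ t → ∀ i, ‖e t i‖ ≤ ηs t * lam t)
    (xbar : ℕ → EuclideanSpace ℝ (Fin d))
    (hxbar : ∀ t, xbar t = (N:ℝ)⁻¹ • ∑ i, x t i)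
    (R1 : ℝ)
    (hR1 : R1 = Finset.univ.sup' ⟨⟨0, hN⟩, Finset.mem_univ _⟩ fun i => ‖x 1 i‖)
    (i : Fin N) (t : ℕ) (ht : 1 ≤ t) :
    ‖x (t+1) i - xbar (t+1)‖ ≤
      N * γ * β ^ t * R1 + N * γ * ∑ l ∈ Finset.Icc 1 t, β ^ (t - l) * lam l * ηs l := by
  classical
  obtain ⟨hη0, hη1⟩ := hη
  have hN1 : (1:ℝ) ≤ (N:ℝ) := by exact_mod_cast hN
  have hNR : (0:ℝ) < (N:ℝ) := by linarith
  set δ : ℝ := η / (4 * (N:ℝ)^2) with hδdef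
  have hδ0 : 0 < δ := by positivity
  have hδ1 : δ < 1 := by
    rw [hδdef, div_lt_one (by positivity)]
    nlinarith
  have h1δ : 0 < 1 - δ := by linarith
  set K : ℝ := (1 - δ)⁻¹ with hKdef
  have hKpos : 0 < K := inv_pos.mpr h1δ
  have hKmul : K * (1 - δ) = 1 := inv_mul_cancel₀ h1δ.ne'
  have hK1 : 1 ≤ K := by nlinarith
  have hβpos : 0 < β := by rw [hβ]; exact Real.rpow_pos_of_pos h1δ _
  have hβ1 : β ≤ 1 := by
    rw [hβ]
    exact Real.rpow_le_one h1δ.le (by linarith) (by positivity)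
  have hBne : (B:ℝ) ≠ 0 := by exact_mod_cast hB.ne'
  have hβB : β ^ B = 1 - δ := by
    calc β ^ B = ((1-δ) ^ ((1:ℝ)/B)) ^ (B:ℝ) := by rw [hβ, Real.rpow_natCast]
      _ = (1-δ) ^ (((1:ℝ)/B) * B) := by rw [← Real.rpow_mul h1δ.le]
      _ = (1-δ) ^ (1:ℝ) := by rw [one_div, inv_mul_cancel₀ hBne]
      _ = 1-δ := Real.rpow_one _
  have hγK : γ = K^2 := by
    rw [hγ, hKdef, show ((-2):ℝ) = -((2:ℕ):ℝ) by norm_num, Real.rpow_neg h1δ.le,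
      Real.rpow_natCast, ← inv_pow]
  have hKβ : ∀ m : ℕ, m ≤ B → 1 ≤ K * β ^ m := by
    intro m hm
    have h1 : β ^ B ≤ β ^ m := pow_le_pow_of_le_one hβpos.le hβ1 hm
    calc (1:ℝ) = K * (1-δ) := hKmul.symm
      _ = K * β^B := by rw [hβB]
      _ ≤ K * β^m := mul_le_mul_of_nonneg_left h1 hKpos.le
  -- deviation process
  set Y : ℕ → Fin N → EuclideanSpace ℝ (Fin d) := fun t i => x t i - xbar t with hYdef
  have hYmean : ∀ t, ∑ i, Y t i = 0 := by
    intro t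
    simp only [hYdef]
    rw [Finset.sum_sub_distrib, Finset.sum_const, Finset.card_univ, Fintype.card_fin,
      hxbar t, ← Nat.cast_smul_eq_nsmul ℝ, smul_smul,
      mul_inv_cancel₀ (by exact_mod_cast hN.ne' : (N:ℝ) ≠ 0), one_smul, sub_self]
  have hP : ∀ s, 1 ≤ s → Y (s+1) = (fun i => ∑ j, W s i j • Y s j)
      + (fun i => e s i - (N:ℝ)⁻¹ • ∑ j, e s j) := by
    intro s hs
    obtain ⟨hnn, hrow, hcol⟩ := hds s hs
    funext i
    show x (s+1) i - xbar (s+1)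
      = (∑ j, W s i j • Y s j) + (e s i - (N:ℝ)⁻¹ • ∑ j, e s j)
    have hxb : xbar (s+1) = xbar s + (N:ℝ)⁻¹ • ∑ j, e s j := by
      rw [hxbar (s+1)]
      have hsum : ∑ i, x (s+1) i = (∑ j, x s j) + ∑ j, e s j := by
        calc ∑ i, x (s+1) i = ∑ i, ((∑ j, W s i j • x s j) + e s i) :=
              Finset.sum_congr rfl (fun i _ => hrec s hs i)
          _ = (∑ i, ∑ j, W s i j • x s j) + ∑ i, e s i := Finset.sum_add_distrib
          _ = (∑ j, x s j) + ∑ j, e s j := by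
              congr 1
              rw [Finset.sum_comm]
              apply Finset.sum_congr rfl
              intro j _
              rw [← Finset.sum_smul, hcol j, one_smul]
      rw [hsum, smul_add, hxbar s]
    have hYstep : ∑ j, W s i j • Y s j = (∑ j, W s i j • x s j) - xbar s := by
      simp only [hYdef]
      calc ∑ j, W s i j • (x s j - xbar s)
          = ∑ j, (W s i j • x s j - W s i j • xbar s) := by
            apply Finset.sum_congr rfl; intro j _; rw [smul_sub]
        _ = (∑ j, W s i j • x s j) - ∑ j, W s i j • xbar s := Finset.sum_sub_distrib _ _
        _ = (∑ j, W s i j • x s j) - xbar s := by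
            rw [← Finset.sum_smul, hrow i, one_smul]
    rw [hrec s hs i, hxb, hYstep]
    abel
  have hPn : ∀ s, 1 ≤ s →
      ‖stk (fun i => e s i - (N:ℝ)⁻¹ • ∑ j, e s j)‖ ≤ Real.sqrt N * (ηs s * lam s) := by
    intro s hs
    have hc : 0 ≤ ηs s * lam s := le_of_lt (mul_pos (hηs s hs) (hlam s hs))
    apply le_of_sq_le_sq' (norm_nonneg _) (by positivity)
    rw [stk_norm_sq2]
    calc ∑ i, ‖e s i - (N:ℝ)⁻¹ • ∑ j, e s j‖^2 ≤ ∑ i, ‖e s i‖^2 := proj_mean_le hN (e s)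
      _ ≤ ∑ _i : Fin N, (ηs s * lam s)^2 := by
          apply Finset.sum_le_sum
          intro i _
          have := he s hs i
          nlinarith [norm_nonneg (e s i)]
      _ = (N:ℝ) * (ηs s * lam s)^2 := by simp [Finset.sum_const, Finset.card_univ]
      _ = (Real.sqrt N * (ηs s * lam s))^2 := by
          rw [show (Real.sqrt N * (ηs s * lam s))^2 = (Real.sqrt N)^2 * (ηs s * lam s)^2
            from mul_pow _ _ 2, Real.sq_sqrt (Nat.cast_nonneg N)]
  have step1 : ∀ s, 1 ≤ s →
      ‖stk (Y (s+1))‖ ≤ ‖stk (Y s)‖ + Real.sqrt N * (ηs s * lam s) := by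
    intro s hs
    obtain ⟨hnn, hrow, hcol⟩ := hds s hs
    rw [hP s hs]
    calc ‖stk ((fun i => ∑ j, W s i j • Y s j) + (fun i => e s i - (N:ℝ)⁻¹ • ∑ j, e s j))‖
        ≤ ‖stk (fun i => ∑ j, W s i j • Y s j)‖
          + ‖stk (fun i => e s i - (N:ℝ)⁻¹ • ∑ j, e s j)‖ := by rw [stk, WithLp.toLp_add]; exact norm_add_le _ _
      _ ≤ ‖stk (Y s)‖ + Real.sqrt N * (ηs s * lam s) :=
          add_le_add (stk_step_nonexpansive (W s) hnn hrow hcol (Y s)) (hPn s hs)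
  have walk : ∀ s, 1 ≤ s → ∀ n, ‖stk (Y (s+n))‖
      ≤ ‖stk (Y s)‖ + ∑ l ∈ Finset.Ico s (s+n), Real.sqrt N * (ηs l * lam l) := by
    intro s hs n
    induction n with
    | zero => simp
    | succ n ih =>
      have h1 := step1 (s+n) (by omega)
      show ‖stk (Y ((s+n)+1))‖ ≤ ‖stk (Y s)‖
        + ∑ l ∈ Finset.Ico s ((s+n)+1), Real.sqrt N * (ηs l * lam l)
      rw [Finset.sum_Ico_succ_top (by omega : s ≤ s+n)]
      linarith [ih]
  have block : ∀ s, 1 ≤ s → ‖stk (Y (s+B))‖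
      ≤ (1-δ) * ‖stk (Y s)‖ + ∑ l ∈ Finset.Ico s (s+B), Real.sqrt N * (ηs l * lam l) := by
    intro s hs
    set u : ℕ → Fin N → EuclideanSpace ℝ (Fin d) :=
      fun m => Nat.rec (Y s) (fun m um => fun i => ∑ j, W (s+m) i j • um j) m with hu
    have hu0 : u 0 = Y s := rfl
    have hcontr : ‖stk (u B)‖ ≤ (1-δ) * ‖stk (u 0)‖ := by
      have := block_contract hN hη0 (le_of_lt hη1) (fun m => W (s+m))
        (fun m hm i j => (hds (s+m) (by omega)).1 i j)
        (fun m hm i => (hds (s+m) (by omega)).2.1 i)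
        (fun m hm j => (hds (s+m) (by omega)).2.2 j)
        (fun m hm i j h => hmin (s+m) (by omega) i j h)
        (fun m hm i => hdiag (s+m) (by omega) i)
        (hconn s hs)
        u (fun m hm i => rfl) (hYmean s)
      rw [← hδdef] at this
      exact this
    have hdev : ∀ m, m ≤ B → ‖stk (Y (s+m) - u m)‖
        ≤ ∑ l ∈ Finset.Ico s (s+m), Real.sqrt N * (ηs l * lam l) := by
      intro m
      induction m with
      | zero => simp [hu0]
      | succ m ih =>
        intro hm1
        have hm : m < B := by omega
        have hsm : 1 ≤ s + m := by omega
        obtain ⟨hnn, hrow, hcol⟩ := hds (s+m) hsm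
        have hdecomp : Y (s+m+1) - u (m+1)
            = (fun i => ∑ j, W (s+m) i j • (Y (s+m) - u m) j)
              + (fun i => e (s+m) i - (N:ℝ)⁻¹ • ∑ j, e (s+m) j) := by
          funext i
          have hYi := congrFun (hP (s+m) hsm) i
          show Y (s+m+1) i - u (m+1) i = _
          have hui : u (m+1) i = ∑ j, W (s+m) i j • u m j := rfl
          have hsplit : ∑ j, W (s+m) i j • (Y (s+m) j - u m j)
              = (∑ j, W (s+m) i j • Y (s+m) j) - (∑ j, W (s+m) i j • u m j) := by
            rw [← Finset.sum_sub_distrib]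
            apply Finset.sum_congr rfl; intro j _; rw [smul_sub]
          show Y (s+m+1) i - u (m+1) i
            = (∑ j, W (s+m) i j • (Y (s+m) j - u m j))
              + (e (s+m) i - (N:ℝ)⁻¹ • ∑ j, e (s+m) j)
          rw [hsplit, hui, hYi]
          show (∑ j, W (s+m) i j • Y (s+m) j) + (e (s+m) i - (N:ℝ)⁻¹ • ∑ j, e (s+m) j)
              - (∑ j, W (s+m) i j • u m j) = _
          abel
        rw [show s+(m+1) = (s+m)+1 from rfl, hdecomp]
        calc ‖stk ((fun i => ∑ j, W (s+m) i j • (Y (s+m) - u m) j)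
              + (fun i => e (s+m) i - (N:ℝ)⁻¹ • ∑ j, e (s+m) j))‖
            ≤ ‖stk (fun i => ∑ j, W (s+m) i j • (Y (s+m) - u m) j)‖
              + ‖stk (fun i => e (s+m) i - (N:ℝ)⁻¹ • ∑ j, e (s+m) j)‖ := by rw [stk, WithLp.toLp_add]; exact norm_add_le _ _
          _ ≤ ‖stk (Y (s+m) - u m)‖ + Real.sqrt N * (ηs (s+m) * lam (s+m)) :=
              add_le_add (stk_step_nonexpansive (W (s+m)) hnn hrow hcol _) (hPn (s+m) hsm)
          _ ≤ (∑ l ∈ Finset.Ico s (s+m), Real.sqrt N * (ηs l * lam l))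
              + Real.sqrt N * (ηs (s+m) * lam (s+m)) := by
              have := ih (by omega)
              linarith
          _ = ∑ l ∈ Finset.Ico s (s+m+1), Real.sqrt N * (ηs l * lam l) :=
              (Finset.sum_Ico_succ_top (by omega) _).symm
    have h2 : stk (Y (s+B)) = stk (u B) + stk (Y (s+B) - u B) := by
      simp only [stk, ← WithLp.toLp_add]
      congr 1
      abel
    calc ‖stk (Y (s+B))‖ ≤ ‖stk (u B)‖ + ‖stk (Y (s+B) - u B)‖ := by
          rw [h2]; exact norm_add_le _ _
      _ ≤ (1-δ) * ‖stk (Y s)‖ + ∑ l ∈ Finset.Ico s (s+B), Real.sqrt N * (ηs l * lam l) := by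
          rw [← hu0]
          exact add_le_add hcontr (hdev B le_rfl)
  -- base estimate
  have hR1nn : 0 ≤ R1 := by
    rw [hR1]
    have := Finset.le_sup' (fun i => ‖x 1 i‖) (Finset.mem_univ (⟨0, hN⟩ : Fin N))
    calc (0:ℝ) ≤ ‖x 1 (⟨0,hN⟩ : Fin N)‖ := norm_nonneg _
      _ ≤ _ := this
  have hY1 : ‖stk (Y 1)‖ ≤ Real.sqrt N * R1 := by
    apply le_of_sq_le_sq' (norm_nonneg _) (by positivity)
    rw [stk_norm_sq2]
    have hproj : ∑ i, ‖x 1 i - (N:ℝ)⁻¹ • ∑ j, x 1 j‖^2 ≤ ∑ i, ‖x 1 i‖^2 :=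
      proj_mean_le hN (x 1)
    calc ∑ i, ‖Y 1 i‖^2 = ∑ i, ‖x 1 i - (N:ℝ)⁻¹ • ∑ j, x 1 j‖^2 := by
          apply Finset.sum_congr rfl; intro j _
          simp only [hYdef]
          rw [hxbar 1]
      _ ≤ ∑ i, ‖x 1 i‖^2 := hproj
      _ ≤ ∑ _i : Fin N, R1^2 := by
          apply Finset.sum_le_sum
          intro j _
          have hj : ‖x 1 j‖ ≤ R1 := by
            rw [hR1]; exact Finset.le_sup' (fun i => ‖x 1 i‖) (Finset.mem_univ j)
          nlinarith [norm_nonneg (x 1 j)]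
      _ = (N:ℝ) * R1^2 := by simp [Finset.sum_const, Finset.card_univ]
      _ = (Real.sqrt N * R1)^2 := by
          rw [show (Real.sqrt N * R1)^2 = (Real.sqrt N)^2 * R1^2 from mul_pow _ _ 2,
            Real.sq_sqrt (Nat.cast_nonneg N)]
  -- main induction
  have main : ∀ s, 1 ≤ s → ‖stk (Y s)‖
      ≤ K * Real.sqrt N * (β^(s-1) * R1
        + ∑ l ∈ Finset.Icc 1 (s-1), β^(s-1-l) * (lam l * ηs l)) := by
    intro s
    induction s using Nat.strong_induction_on with
    | _ s ih =>
      intro hs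
      by_cases hcase : s ≤ B
      · -- short horizon: walk from time 1
        have hw := walk 1 le_rfl (s-1)
        rw [show 1 + (s-1) = s by omega] at hw
        have hIcoIcc : Finset.Ico 1 s = Finset.Icc 1 (s-1) := by
          rw [show s = (s-1)+1 by omega]
          exact Finset.Ico_add_one_right_eq_Icc _ _
        rw [hIcoIcc] at hw
        have hterm : ∀ l ∈ Finset.Icc 1 (s-1), Real.sqrt N * (ηs l * lam l)
            ≤ K * Real.sqrt N * (β^(s-1-l) * (lam l * ηs l)) := by
          intro l hl
          rw [Finset.mem_Icc] at hl
          have h1 : 1 ≤ K * β^(s-1-l) := hKβ _ (by omega)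
          have hc : 0 ≤ Real.sqrt N * (ηs l * lam l) :=
            mul_nonneg (Real.sqrt_nonneg _) (le_of_lt (mul_pos (hηs l hl.1) (hlam l hl.1)))
          calc Real.sqrt N * (ηs l * lam l) = 1 * (Real.sqrt N * (ηs l * lam l)) := (one_mul _).symm
            _ ≤ (K * β^(s-1-l)) * (Real.sqrt N * (ηs l * lam l)) :=
                mul_le_mul_of_nonneg_right h1 hc
            _ = K * Real.sqrt N * (β^(s-1-l) * (lam l * ηs l)) := by ring
        have hbase : ‖stk (Y 1)‖ ≤ K * Real.sqrt N * (β^(s-1) * R1) := by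
          have h1 : 1 ≤ K * β^(s-1) := hKβ _ (by omega)
          calc ‖stk (Y 1)‖ ≤ Real.sqrt N * R1 := hY1
            _ = 1 * (Real.sqrt N * R1) := (one_mul _).symm
            _ ≤ (K * β^(s-1)) * (Real.sqrt N * R1) :=
                mul_le_mul_of_nonneg_right h1 (mul_nonneg (Real.sqrt_nonneg _) hR1nn)
            _ = K * Real.sqrt N * (β^(s-1) * R1) := by ring
        calc ‖stk (Y s)‖
            ≤ ‖stk (Y 1)‖ + ∑ l ∈ Finset.Icc 1 (s-1), Real.sqrt N * (ηs l * lam l) := hw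
          _ ≤ K * Real.sqrt N * (β^(s-1) * R1)
              + ∑ l ∈ Finset.Icc 1 (s-1), K * Real.sqrt N * (β^(s-1-l) * (lam l * ηs l)) :=
              add_le_add hbase (Finset.sum_le_sum hterm)
          _ = K * Real.sqrt N * (β^(s-1) * R1
              + ∑ l ∈ Finset.Icc 1 (s-1), β^(s-1-l) * (lam l * ηs l)) := by
              rw [mul_add, Finset.mul_sum]
      · -- long horizon: contract over the last block
        push_neg at hcase
        have hs1 : 1 ≤ s - B := by omega
        have hb := block (s-B) hs1
        rw [show s - B + B = s by omega] at hb
        have hih := ih (s-B) (by omega) hs1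
        have h1 : (1-δ) * ‖stk (Y (s-B))‖
            ≤ (1-δ) * (K * Real.sqrt N * (β^(s-B-1) * R1
              + ∑ l ∈ Finset.Icc 1 (s-B-1), β^(s-B-1-l) * (lam l * ηs l))) :=
          mul_le_mul_of_nonneg_left hih h1δ.le
        -- rewrite Icc sums as Ico sums
        have e1 : Finset.Ico 1 (s-B) = Finset.Icc 1 (s-B-1) := by
          rw [show s-B = (s-B-1)+1 by omega]
          exact Finset.Ico_add_one_right_eq_Icc _ _
        have e2 : Finset.Ico 1 s = Finset.Icc 1 (s-1) := by
          rw [show s = (s-1)+1 by omega]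
          exact Finset.Ico_add_one_right_eq_Icc _ _
        have e3 : Finset.Ico (s-B) s = Finset.Icc (s-B) (s-1) := by
          rw [show s = (s-1)+1 by omega]
          exact Finset.Ico_add_one_right_eq_Icc _ _
        -- exponent algebra
        have hexp0 : (1-δ) * β^(s-B-1) = β^(s-1) := by
          rw [← hβB, ← pow_add]
          congr 1
          omega
        have hexp : ∀ l, l ∈ Finset.Icc 1 (s-B-1) → (1-δ) * β^(s-B-1-l) = β^(s-1-l) := by
          intro l hl
          rw [Finset.mem_Icc] at hl
          rw [← hβB, ← pow_add]
          congr 1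
          omega
        -- combine
        have hrearr : (1-δ) * (K * Real.sqrt N * (β^(s-B-1) * R1
              + ∑ l ∈ Finset.Icc 1 (s-B-1), β^(s-B-1-l) * (lam l * ηs l)))
            = K * Real.sqrt N * (β^(s-1) * R1
              + ∑ l ∈ Finset.Icc 1 (s-B-1), β^(s-1-l) * (lam l * ηs l)) := by
          rw [mul_add (K * Real.sqrt N), mul_add (K * Real.sqrt N), mul_add (1-δ)]
          congr 1
          · rw [← hexp0]; ring
          · rw [Finset.mul_sum, Finset.mul_sum, Finset.mul_sum]
            apply Finset.sum_congr rfl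
            intro l hl
            rw [← hexp l hl]; ring
        have htail : ∀ l ∈ Finset.Icc (s-B) (s-1), Real.sqrt N * (ηs l * lam l)
            ≤ K * Real.sqrt N * (β^(s-1-l) * (lam l * ηs l)) := by
          intro l hl
          rw [Finset.mem_Icc] at hl
          have hl1 : 1 ≤ l := by omega
          have h1 : 1 ≤ K * β^(s-1-l) := hKβ _ (by omega)
          have hc : 0 ≤ Real.sqrt N * (ηs l * lam l) :=
            mul_nonneg (Real.sqrt_nonneg _) (le_of_lt (mul_pos (hηs l hl1) (hlam l hl1)))
          calc Real.sqrt N * (ηs l * lam l) = 1 * (Real.sqrt N * (ηs l * lam l)) := (one_mul _).symm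
            _ ≤ (K * β^(s-1-l)) * (Real.sqrt N * (ηs l * lam l)) :=
                mul_le_mul_of_nonneg_right h1 hc
            _ = K * Real.sqrt N * (β^(s-1-l) * (lam l * ηs l)) := by ring
        have hsplitsum : (∑ l ∈ Finset.Icc 1 (s-B-1), K * Real.sqrt N * (β^(s-1-l) * (lam l * ηs l)))
            + ∑ l ∈ Finset.Icc (s-B) (s-1), K * Real.sqrt N * (β^(s-1-l) * (lam l * ηs l))
            = ∑ l ∈ Finset.Icc 1 (s-1), K * Real.sqrt N * (β^(s-1-l) * (lam l * ηs l)) := by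
          rw [← e1, ← e2, ← e3]
          exact Finset.sum_Ico_consecutive _ (by omega) (by omega)
        calc ‖stk (Y s)‖
            ≤ (1-δ) * ‖stk (Y (s-B))‖
              + ∑ l ∈ Finset.Ico (s-B) s, Real.sqrt N * (ηs l * lam l) := hb
          _ ≤ K * Real.sqrt N * (β^(s-1) * R1
              + ∑ l ∈ Finset.Icc 1 (s-B-1), β^(s-1-l) * (lam l * ηs l))
              + ∑ l ∈ Finset.Icc (s-B) (s-1), K * Real.sqrt N * (β^(s-1-l) * (lam l * ηs l)) := by
              rw [e3] at *
              have := le_trans h1 (le_of_eq hrearr)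
              exact add_le_add this (Finset.sum_le_sum htail)
          _ = K * Real.sqrt N * (β^(s-1) * R1)
              + ((∑ l ∈ Finset.Icc 1 (s-B-1), K * Real.sqrt N * (β^(s-1-l) * (lam l * ηs l)))
                + ∑ l ∈ Finset.Icc (s-B) (s-1), K * Real.sqrt N * (β^(s-1-l) * (lam l * ηs l))) := by
              rw [mul_add, Finset.mul_sum]
              ring
          _ = K * Real.sqrt N * (β^(s-1) * R1)
              + ∑ l ∈ Finset.Icc 1 (s-1), K * Real.sqrt N * (β^(s-1-l) * (lam l * ηs l)) := by
              rw [hsplitsum]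
          _ = K * Real.sqrt N * (β^(s-1) * R1
              + ∑ l ∈ Finset.Icc 1 (s-1), β^(s-1-l) * (lam l * ηs l)) := by
              rw [mul_add, Finset.mul_sum]
  -- conclusion
  have hmain := main (t+1) (by omega)
  rw [show t+1-1 = t from rfl] at hmain
  have hsingle : ‖x (t+1) i - xbar (t+1)‖ ≤ ‖stk (Y (t+1))‖ := stk_single_le (Y (t+1)) i
  have hsN : Real.sqrt N ≤ (N:ℝ) := by
    have h := Real.sqrt_le_sqrt (show (N:ℝ) ≤ (N:ℝ)^2 by nlinarith)
    rwa [Real.sqrt_sq (Nat.cast_nonneg N)] at h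
  have hcoef : K * Real.sqrt N ≤ (N:ℝ) * γ := by
    rw [hγK]
    calc K * Real.sqrt N ≤ K * (N:ℝ) := mul_le_mul_of_nonneg_left hsN hKpos.le
      _ ≤ (K * K) * (N:ℝ) := mul_le_mul_of_nonneg_right (by nlinarith [hK1]) (le_of_lt hNR)
      _ = (N:ℝ) * K^2 := by ring
  have hbr : 0 ≤ β^t * R1 + ∑ l ∈ Finset.Icc 1 t, β^(t-l) * (lam l * ηs l) := by
    apply add_nonneg (mul_nonneg (pow_nonneg hβpos.le t) hR1nn)
    apply Finset.sum_nonneg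
    intro l hl
    rw [Finset.mem_Icc] at hl
    exact mul_nonneg (pow_nonneg hβpos.le _) (le_of_lt (mul_pos (hlam l hl.1) (hηs l hl.1)))
  calc ‖x (t+1) i - xbar (t+1)‖ ≤ ‖stk (Y (t+1))‖ := hsingle
    _ ≤ K * Real.sqrt N * (β^t * R1 + ∑ l ∈ Finset.Icc 1 t, β^(t-l) * (lam l * ηs l)) := hmain
    _ ≤ (N:ℝ) * γ * (β^t * R1 + ∑ l ∈ Finset.Icc 1 t, β^(t-l) * (lam l * ηs l)) :=
        mul_le_mul_of_nonneg_right hcoef hbr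
    _ = N * γ * β ^ t * R1 + N * γ * ∑ l ∈ Finset.Icc 1 t, β ^ (t - l) * lam l * ηs l := by
        rw [mul_add, Finset.mul_sum, Finset.mul_sum]
        congr 1
        · ring
        · apply Finset.sum_congr rfl
          intro l _
          ring
end

section
/- Let β ∈ (0,1), let (η_t)_{t≥1} be a nonincreasing sequence of positive reals, and let (λ_t)_{t≥1} be positive reals. Then for every T ≥ 1, Σ_{t=1}^{T} η_t ( Σ_{l=1}^{t−1} β^{t−l} λ_l η_l )² ≤ (1/(1−β))² Σ_{l=1}^{T−1} λ_l² η_l³. -/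
open Finset

private lemma geo_aux {β : ℝ} (h0 : 0 ≤ β) (h1 : β < 1) (s : Finset ℕ) :
    ∑ k ∈ s, β ^ k ≤ 1 / (1 - β) := by
  have := Summable.sum_le_tsum s (fun i _ => pow_nonneg h0 i)
    (summable_geometric_of_lt_one h0 h1)
  rw [tsum_geometric_of_lt_one h0 h1] at this
  simpa [one_div] using this

private lemma sub_reindex {β : ℝ} (a b : ℕ) (h : b ≤ a) :
    ∑ l ∈ Icc b a, β ^ (a + 1 - l) = ∑ k ∈ Icc 1 (a + 1 - b), β ^ k := by
  apply Finset.sum_nbij' (fun l => a + 1 - l) (fun k => a + 1 - k) <;>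
    intro x hx <;> simp only [mem_Icc] at * <;> omega

theorem stmt9 (β : ℝ) (hβ : β ∈ Set.Ioo (0:ℝ) 1)
    (ηs lam : ℕ → ℝ)
    (hηs : ∀ t, 1 ≤ t → 0 < ηs t)
    (hmono : ∀ t, 1 ≤ t → ηs (t+1) ≤ ηs t)
    (hlam : ∀ t, 1 ≤ t → 0 < lam t)
    (T : ℕ) (hT : 1 ≤ T) :
    ∑ t ∈ Finset.Icc 1 T, ηs t * (∑ l ∈ Finset.Icc 1 (t-1), β ^ (t-l) * lam l * ηs l) ^ 2 ≤
      (1 / (1 - β)) ^ 2 * ∑ l ∈ Finset.Icc 1 (T-1), lam l ^ 2 * ηs l ^ 3 := by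
  obtain ⟨hβ0, hβ1⟩ := hβ
  have hβ0' : (0:ℝ) ≤ β := hβ0.le
  have h1β : (0:ℝ) < 1 - β := by linarith
  have hc : (0:ℝ) < 1 / (1 - β) := by positivity
  -- antitone
  have hanti : ∀ l t : ℕ, 1 ≤ l → l ≤ t → ηs t ≤ ηs l := by
    intro l t hl hlt
    induction t with
    | zero => omega
    | succ n ih =>
      rcases Nat.lt_or_ge l (n+1) with h | h
      · exact le_trans (hmono n (by omega)) (ih (by omega))
      · have : l = n + 1 := by omega
        simp [this]
  -- geometric bounds
  have geo1 : ∀ t : ℕ, ∑ l ∈ Icc 1 (t-1), β ^ (t-l) ≤ 1 / (1 - β) := by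
    intro t
    rcases Nat.eq_zero_or_pos t with h | h
    · rw [h]; simp; linarith
    · have ht : t - 1 + 1 = t := by omega
      calc ∑ l ∈ Icc 1 (t-1), β ^ (t-l)
          = ∑ l ∈ Icc 1 (t-1), β ^ (t - 1 + 1 - l) := by rw [ht]
        _ = ∑ k ∈ Icc 1 (t - 1 + 1 - 1), β ^ k := by
            rcases Nat.eq_zero_or_pos (t-1) with h0 | h0
            · simp [h0]
            · exact sub_reindex _ _ h0
        _ ≤ 1 / (1 - β) := geo_aux hβ0' hβ1 _
  -- pointwise bound for each t
  have key : ∀ t ∈ Icc 1 T,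
      ηs t * (∑ l ∈ Icc 1 (t-1), β ^ (t-l) * lam l * ηs l) ^ 2 ≤
        (1 / (1 - β)) * ∑ l ∈ Icc 1 (t-1), β ^ (t-l) * (lam l ^ 2 * ηs l ^ 3) := by
    intro t ht
    simp only [mem_Icc] at ht
    have hηt : 0 < ηs t := hηs t ht.1
    -- Cauchy-Schwarz
    have cs : (∑ l ∈ Icc 1 (t-1), β ^ (t-l) * lam l * ηs l) ^ 2 ≤
        (∑ l ∈ Icc 1 (t-1), β ^ (t-l)) *
        (∑ l ∈ Icc 1 (t-1), β ^ (t-l) * (lam l * ηs l) ^ 2) := by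
      have hsq : ∀ n : ℕ, (Real.sqrt β ^ n) ^ 2 = β ^ n := by
        intro n
        rw [← pow_mul, mul_comm, pow_mul, Real.sq_sqrt hβ0']
      have := Finset.sum_mul_sq_le_sq_mul_sq (Icc 1 (t-1))
        (fun l => Real.sqrt β ^ (t-l)) (fun l => Real.sqrt β ^ (t-l) * (lam l * ηs l))
      calc (∑ l ∈ Icc 1 (t-1), β ^ (t-l) * lam l * ηs l) ^ 2
          = (∑ l ∈ Icc 1 (t-1), (Real.sqrt β ^ (t-l)) *
              (Real.sqrt β ^ (t-l) * (lam l * ηs l))) ^ 2 := by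
            congr 1; apply Finset.sum_congr rfl; intro l _
            rw [← mul_assoc, ← sq, hsq]; ring
        _ ≤ (∑ l ∈ Icc 1 (t-1), (Real.sqrt β ^ (t-l)) ^ 2) *
              (∑ l ∈ Icc 1 (t-1), (Real.sqrt β ^ (t-l) * (lam l * ηs l)) ^ 2) := this
        _ = (∑ l ∈ Icc 1 (t-1), β ^ (t-l)) *
              (∑ l ∈ Icc 1 (t-1), β ^ (t-l) * (lam l * ηs l) ^ 2) := by
            congr 1 <;> (apply Finset.sum_congr rfl; intro l _)
            · exact hsq _
            · rw [mul_pow, hsq]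
    have step2 : ηs t * ∑ l ∈ Icc 1 (t-1), β ^ (t-l) * (lam l * ηs l) ^ 2 ≤
        ∑ l ∈ Icc 1 (t-1), β ^ (t-l) * (lam l ^ 2 * ηs l ^ 3) := by
      rw [Finset.mul_sum]
      apply Finset.sum_le_sum
      intro l hl
      simp only [mem_Icc] at hl
      have hηl : 0 < ηs l := hηs l hl.1
      have hle : ηs t ≤ ηs l := hanti l t hl.1 (by omega)
      have : ηs t * (β ^ (t-l) * (lam l * ηs l) ^ 2) =
          β ^ (t-l) * lam l ^ 2 * ηs l ^ 2 * ηs t := by ring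
      rw [this]
      have : β ^ (t-l) * (lam l ^ 2 * ηs l ^ 3) =
          β ^ (t-l) * lam l ^ 2 * ηs l ^ 2 * ηs l := by ring
      rw [this]
      apply mul_le_mul_of_nonneg_left hle
      positivity
    calc ηs t * (∑ l ∈ Icc 1 (t-1), β ^ (t-l) * lam l * ηs l) ^ 2
        ≤ ηs t * ((∑ l ∈ Icc 1 (t-1), β ^ (t-l)) *
            (∑ l ∈ Icc 1 (t-1), β ^ (t-l) * (lam l * ηs l) ^ 2)) :=
          mul_le_mul_of_nonneg_left cs hηt.le
      _ ≤ ηs t * ((1 / (1 - β)) *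
            (∑ l ∈ Icc 1 (t-1), β ^ (t-l) * (lam l * ηs l) ^ 2)) := by
          apply mul_le_mul_of_nonneg_left _ hηt.le
          apply mul_le_mul_of_nonneg_right (geo1 t)
          apply Finset.sum_nonneg
          intro l hl
          positivity
      _ = (1 / (1 - β)) * (ηs t * ∑ l ∈ Icc 1 (t-1), β ^ (t-l) * (lam l * ηs l) ^ 2) := by
          ring
      _ ≤ (1 / (1 - β)) * ∑ l ∈ Icc 1 (t-1), β ^ (t-l) * (lam l ^ 2 * ηs l ^ 3) :=
          mul_le_mul_of_nonneg_left step2 hc.le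
  calc ∑ t ∈ Icc 1 T, ηs t * (∑ l ∈ Icc 1 (t-1), β ^ (t-l) * lam l * ηs l) ^ 2
      ≤ ∑ t ∈ Icc 1 T, (1 / (1 - β)) * ∑ l ∈ Icc 1 (t-1), β ^ (t-l) * (lam l ^ 2 * ηs l ^ 3) :=
        Finset.sum_le_sum key
    _ = (1 / (1 - β)) * ∑ t ∈ Icc 1 T, ∑ l ∈ Icc 1 (t-1), β ^ (t-l) * (lam l ^ 2 * ηs l ^ 3) := by
        rw [Finset.mul_sum]
    _ = (1 / (1 - β)) * ∑ l ∈ Icc 1 (T-1), ∑ t ∈ Icc (l+1) T, β ^ (t-l) * (lam l ^ 2 * ηs l ^ 3) := by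
        congr 1
        apply Finset.sum_comm'
        intro t l
        simp only [mem_Icc]
        omega
    _ ≤ (1 / (1 - β)) * ∑ l ∈ Icc 1 (T-1), (1 / (1 - β)) * (lam l ^ 2 * ηs l ^ 3) := by
        apply mul_le_mul_of_nonneg_left _ hc.le
        apply Finset.sum_le_sum
        intro l hl
        simp only [mem_Icc] at hl
        have h1 : ∑ t ∈ Icc (l+1) T, β ^ (t-l) * (lam l ^ 2 * ηs l ^ 3) =
            (∑ t ∈ Icc (l+1) T, β ^ (t-l)) * (lam l ^ 2 * ηs l ^ 3) := by
          rw [Finset.sum_mul]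
        rw [h1]
        have hgeo : ∑ t ∈ Icc (l+1) T, β ^ (t-l) ≤ 1 / (1 - β) := by
          have : ∑ t ∈ Icc (l+1) T, β ^ (t-l) = ∑ k ∈ Icc 1 (T - l), β ^ k := by
            apply Finset.sum_nbij' (fun t => t - l) (fun k => k + l) <;>
              intro x hx <;> simp only [mem_Icc] at * <;> omega
          rw [this]
          exact geo_aux hβ0' hβ1 _
        have hpos : 0 < lam l ^ 2 * ηs l ^ 3 := by
          have := hlam l hl.1; have := hηs l hl.1; positivity
        exact mul_le_mul_of_nonneg_right hgeo hpos.le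
    _ = (1 / (1 - β)) ^ 2 * ∑ l ∈ Icc 1 (T-1), lam l ^ 2 * ηs l ^ 3 := by
        rw [← Finset.mul_sum]; ring
end
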